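/- arXiv:2403.04902 — 12 statements merged into one kernel-verified Lean document; each statement's English description precedes it below -/
import Mathlib

section
/- Let G be a positively pseudo-invertible graph with adjacency matrix A and signature matrix D such that DA†D ≥ 0. Then the Moore-Penrose inverse of DA†D is signable by the same signature matrix D, and D(DA†D)†D = A. Consequently, the pseudo-inverse of the pseudo-inverse graph is the original graph: (G†)† = G. -/
open Matrix

/-- The four Moore-Penrose (Penrose) axioms for a real matrix `K` and candidate inverse `K'`. -/
def IsMoorePenrose {α β : Type*} [Fintype α] [Fintype β]
    (K : Matrix α β ℝ) (K' : Matrix β α ℝ) : Prop :=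
  (K * K')ᵀ = K * K' ∧ (K' * K)ᵀ = K' * K ∧ K * K' * K = K ∧ K' * K * K' = K'

/-- Diagonal entries of a ±1 signature matrix. -/
def IsSign {α : Type*} (d : α → ℝ) : Prop := ∀ i, d i = 1 ∨ d i = -1

/-- Uniqueness of the Moore-Penrose inverse. -/
lemma mp_unique {n : ℕ} (K X Y : Matrix (Fin n) (Fin n) ℝ)
    (hX : IsMoorePenrose K X) (hY : IsMoorePenrose K Y) : X = Y := by
  obtain ⟨hX1, hX2, hX3, hX4⟩ := hX
  obtain ⟨hY1, hY2, hY3, hY4⟩ := hY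
  have hKX : K * X = K * Y := by
    calc K * X = (K * Y * K) * X := by rw [hY3]
    _ = (K * Y) * (K * X) := by rw [Matrix.mul_assoc, Matrix.mul_assoc]
    _ = (K * Y)ᵀ * (K * X)ᵀ := by rw [hY1, hX1]
    _ = Yᵀ * (K * X * K)ᵀ := by
        simp [Matrix.transpose_mul, Matrix.mul_assoc]
    _ = Yᵀ * Kᵀ := by rw [hX3]
    _ = (K * Y)ᵀ := by rw [Matrix.transpose_mul]
    _ = K * Y := hY1
  have hXK : X * K = Y * K := by
    calc X * K = X * (K * Y * K) := by rw [hY3]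
    _ = (X * K) * (Y * K) := by
        simp [Matrix.mul_assoc]
    _ = (X * K)ᵀ * (Y * K)ᵀ := by rw [hX2, hY2]
    _ = (K * X * K)ᵀ * Yᵀ := by
        simp [Matrix.transpose_mul, Matrix.mul_assoc]
    _ = Kᵀ * Yᵀ := by rw [hX3]
    _ = (Y * K)ᵀ := by rw [Matrix.transpose_mul]
    _ = Y * K := hY2
  calc X = X * K * X := hX4.symm
  _ = X * (K * Y) := by rw [Matrix.mul_assoc, hKX]
  _ = (Y * K) * Y := by rw [← Matrix.mul_assoc, hXK]
  _ = Y := hY4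

/-- For a positively pseudo-invertible graph with adjacency matrix `A`, MP inverse `A'` and
signature `d` with `D A' D ≥ 0`: the MP inverse of `D A' D` is `D A D` (signable by the same `D`),
and `D (D A' D)† D = A`; hence `(G†)† = G`. -/
theorem stmt_2 {m : ℕ} (A A' : Matrix (Fin m) (Fin m) ℝ) (d : Fin m → ℝ)
    (hA : Aᵀ = A) (hnn : ∀ i j, 0 ≤ A i j)
    (hMP : IsMoorePenrose A A') (hd : IsSign d)
    (hpos : ∀ i j, 0 ≤ (Matrix.diagonal d * A' * Matrix.diagonal d) i j) :
    IsMoorePenrose (Matrix.diagonal d * A' * Matrix.diagonal d)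
      (Matrix.diagonal d * A * Matrix.diagonal d) ∧
    ∀ C : Matrix (Fin m) (Fin m) ℝ,
      IsMoorePenrose (Matrix.diagonal d * A' * Matrix.diagonal d) C →
      Matrix.diagonal d * C * Matrix.diagonal d = A := by
  obtain ⟨h1, h2, h3, h4⟩ := hMP
  set D : Matrix (Fin m) (Fin m) ℝ := Matrix.diagonal d with hD
  have hD2 : D * D = 1 := by
    rw [hD, Matrix.diagonal_mul_diagonal]
    have : (fun i => d i * d i) = (fun _ => (1:ℝ)) :=
      funext fun i => by rcases hd i with h | h <;> simp [h]
    rw [this, Matrix.diagonal_one]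
  have hDT : Dᵀ = D := Matrix.diagonal_transpose d
  have key : ∀ X Y : Matrix (Fin m) (Fin m) ℝ, (D * X * D) * (D * Y * D) = D * (X * Y) * D := by
    intro X Y
    simp only [Matrix.mul_assoc]
    rw [← Matrix.mul_assoc D D (Y * D), hD2, Matrix.one_mul]
  have keyT : ∀ X : Matrix (Fin m) (Fin m) ℝ, (D * X * D)ᵀ = D * Xᵀ * D := by
    intro X
    rw [Matrix.transpose_mul, Matrix.transpose_mul, hDT, Matrix.mul_assoc]
  have hmp : IsMoorePenrose (D * A' * D) (D * A * D) := by
    refine ⟨?_, ?_, ?_, ?_⟩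
    · rw [key, keyT, h2]
    · rw [key, keyT, h1]
    · rw [key, key, h4]
    · rw [key, key, h3]
  refine ⟨hmp, fun C hC => ?_⟩
  have hCeq : D * A * D = C := mp_unique (D * A' * D) _ _ hmp hC
  rw [← hCeq]
  simp only [Matrix.mul_assoc]
  rw [hD2, Matrix.mul_one, ← Matrix.mul_assoc, hD2, Matrix.one_mul]
end

section
/- If a simple connected graph G on m vertices has a signable Moore-Penrose pseudo-inverse, then the weighted pseudo-inverse graph G† is also connected. -/
open Matrix

/-- Irreducibility of a real square matrix (connectedness of the weighted graph it defines). -/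
def MatIrreducible {m : ℕ} (M : Matrix (Fin m) (Fin m) ℝ) : Prop :=
  ∀ S : Finset (Fin m), S.Nonempty → S ≠ Finset.univ → ∃ i ∈ S, ∃ j ∈ Sᶜ, M i j ≠ 0

lemma MP_transpose {α β : Type*} [Fintype α] [Fintype β]
    {K : Matrix α β ℝ} {K' : Matrix β α ℝ} (h : IsMoorePenrose K K') :
    IsMoorePenrose Kᵀ K'ᵀ := by
  obtain ⟨h1, h2, h3, h4⟩ := h
  refine ⟨?_, ?_, ?_, ?_⟩
  · rw [← transpose_mul, transpose_transpose, h2]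
  · rw [← transpose_mul, transpose_transpose, h1]
  · rw [← transpose_mul, ← transpose_mul, ← Matrix.mul_assoc, h3]
  · rw [← transpose_mul, ← transpose_mul, ← Matrix.mul_assoc, h4]

lemma MP_unique {α β : Type*} [Fintype α] [Fintype β]
    {K : Matrix α β ℝ} {K1 K2 : Matrix β α ℝ}
    (h : IsMoorePenrose K K1) (h' : IsMoorePenrose K K2) : K1 = K2 := by
  obtain ⟨h1, h2, h3, h4⟩ := h
  obtain ⟨g1, g2, g3, g4⟩ := h'
  have e1 : K * K1 = K * K2 := by
    calc K * K1 = (K * K2 * K) * K1 := by rw [g3]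
    _ = (K * K2) * (K * K1) := by rw [Matrix.mul_assoc (K * K2) K K1]
    _ = (K * K2)ᵀ * (K * K1)ᵀ := by rw [g1, h1]
    _ = K2ᵀ * (K * K1 * K)ᵀ := by simp [transpose_mul, Matrix.mul_assoc]
    _ = K2ᵀ * Kᵀ := by rw [h3]
    _ = (K * K2)ᵀ := (transpose_mul _ _).symm
    _ = K * K2 := g1
  have e2 : K1 * K = K2 * K := by
    calc K1 * K = K1 * (K * K2 * K) := by rw [g3]
    _ = (K1 * K) * (K2 * K) := by simp [Matrix.mul_assoc]
    _ = (K1 * K)ᵀ * (K2 * K)ᵀ := by rw [h2, g2]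
    _ = (K * K1 * K)ᵀ * K2ᵀ := by simp [transpose_mul, Matrix.mul_assoc]
    _ = Kᵀ * K2ᵀ := by rw [h3]
    _ = (K2 * K)ᵀ := (transpose_mul _ _).symm
    _ = K2 * K := g2
  calc K1 = K1 * K * K1 := h4.symm
  _ = K2 * K * K1 := by rw [e2]
  _ = K2 * (K * K1) := Matrix.mul_assoc _ _ _
  _ = K2 * (K * K2) := by rw [e1]
  _ = K2 := by rw [← Matrix.mul_assoc, g4]

lemma MP_conj {m : ℕ} {K K' : Matrix (Fin m) (Fin m) ℝ} {u : Fin m → ℝ}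
    (hu : ∀ i, u i * u i = 1) (h : IsMoorePenrose K K') :
    IsMoorePenrose (diagonal u * K * diagonal u) (diagonal u * K' * diagonal u) := by
  obtain ⟨h1, h2, h3, h4⟩ := h
  have hu2 : diagonal u * diagonal u = (1 : Matrix (Fin m) (Fin m) ℝ) := by
    rw [diagonal_mul_diagonal]
    have : (fun i => u i * u i) = fun _ => (1 : ℝ) := funext hu
    rw [this, diagonal_one]
  have hdt : (diagonal u)ᵀ = diagonal u := diagonal_transpose u
  have hprod : ∀ X Y : Matrix (Fin m) (Fin m) ℝ,
      (diagonal u * X * diagonal u) * (diagonal u * Y * diagonal u)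
        = diagonal u * (X * Y) * diagonal u := by
    intro X Y
    simp only [mul_assoc]
    rw [← mul_assoc (diagonal u) (diagonal u) (Y * diagonal u), hu2, one_mul]
  have key : ∀ X : Matrix (Fin m) (Fin m) ℝ, Xᵀ = X →
      (diagonal u * X * diagonal u)ᵀ = diagonal u * X * diagonal u := by
    intro X hX
    rw [transpose_mul, transpose_mul, hdt, hX, ← mul_assoc]
  refine ⟨?_, ?_, ?_, ?_⟩
  · rw [hprod]; exact key _ h1
  · rw [hprod]; exact key _ h2
  · rw [hprod, hprod, h3]
  · rw [hprod, hprod, h4]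

lemma walk_cross {m : ℕ} (G : SimpleGraph (Fin m)) (S : Finset (Fin m)) :
    ∀ {a b : Fin m}, G.Walk a b → a ∈ S → b ∉ S →
      ∃ i ∈ S, ∃ j ∈ Sᶜ, G.Adj i j := by
  intro a b w
  induction w with
  | nil => exact fun h h' => absurd h h'
  | @cons x y z h p ih =>
    intro ha hb
    by_cases hc : y ∈ S
    · exact ih hc hb
    · exact ⟨x, ha, y, Finset.mem_compl.2 hc, h⟩

lemma core {m : ℕ} (G : SimpleGraph (Fin m)) [DecidableRel G.Adj]
    (hconn : G.Connected) (A' : Matrix (Fin m) (Fin m) ℝ) (d : Fin m → ℝ)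
    (hMP : IsMoorePenrose (G.adjMatrix ℝ) A') (hd : IsSign d) :
    MatIrreducible (Matrix.diagonal d * A' * Matrix.diagonal d) := by
  intro S hS hSu
  by_contra hcon
  push_neg at hcon
  set A : Matrix (Fin m) (Fin m) ℝ := G.adjMatrix ℝ with hA
  have hAt : Aᵀ = A := by simp [hA]
  have hA't : A'ᵀ = A' := by
    have h2 := MP_transpose hMP
    rw [hAt] at h2
    exact MP_unique h2 hMP
  have hdne : ∀ i, d i ≠ 0 := by
    intro i; rcases hd i with h | h <;> rw [h] <;> norm_num
  -- entries of B
  have hBent : ∀ i j, (diagonal d * A' * diagonal d) i j = d i * A' i j * d j := by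
    intro i j
    rw [mul_diagonal, diagonal_mul]
  -- zero block of A' on S × Sᶜ
  have hzero : ∀ i ∈ S, ∀ j ∈ Sᶜ, A' i j = 0 := by
    intro i hi j hj
    have h0 := hcon i hi j hj
    rw [hBent] at h0
    rcases mul_eq_zero.1 h0 with h0 | h0
    · rcases mul_eq_zero.1 h0 with h0 | h0
      · exact absurd h0 (hdne i)
      · exact h0
    · exact absurd h0 (hdne j)
  -- symmetry of B gives the other block
  have hBt : (diagonal d * A' * diagonal d)ᵀ = diagonal d * A' * diagonal d := by
    rw [transpose_mul, transpose_mul, diagonal_transpose, hA't, ← mul_assoc]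
  have hzero' : ∀ i ∈ S, ∀ j ∈ Sᶜ, A' j i = 0 := by
    intro i hi j hj
    have h0 := hcon i hi j hj
    have h0' : (diagonal d * A' * diagonal d) j i = 0 := by
      have := congrFun (congrFun hBt i) j
      rw [transpose_apply] at this
      rw [this, h0]
    rw [hBent] at h0'
    rcases mul_eq_zero.1 h0' with h0' | h0'
    · rcases mul_eq_zero.1 h0' with h0' | h0'
      · exact absurd h0' (hdne j)
      · exact h0'
    · exact absurd h0' (hdne i)
  -- the signature for conjugation
  set u : Fin m → ℝ := fun i => if i ∈ S then -1 else 1 with hu_def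
  have hu : ∀ i, u i * u i = 1 := by
    intro i; simp only [hu_def]; split_ifs <;> norm_num
  have hUA' : diagonal u * A' * diagonal u = A' := by
    ext i j
    rw [mul_diagonal, diagonal_mul]
    by_cases hi : i ∈ S <;> by_cases hj : j ∈ S
    · simp [hu_def, hi, hj]
    · rw [hzero i hi j (Finset.mem_compl.2 hj)]; ring
    · rw [hzero' j hj i (Finset.mem_compl.2 hi)]; ring
    · simp [hu_def, hi, hj]
  have hswap : IsMoorePenrose A' A := ⟨hMP.2.1, hMP.1, hMP.2.2.2, hMP.2.2.1⟩
  have hconjA : IsMoorePenrose A' (diagonal u * A * diagonal u) := by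
    have := MP_conj hu hswap
    rwa [hUA'] at this
  have hUAU : diagonal u * A * diagonal u = A := MP_unique hconjA hswap
  -- get a crossing edge from connectivity
  obtain ⟨i, hi⟩ := hS
  obtain ⟨j, hj⟩ : ∃ j, j ∉ S := by
    by_contra h
    push_neg at h
    exact hSu (Finset.eq_univ_iff_forall.2 h)
  obtain ⟨w⟩ := hconn.preconnected i j
  obtain ⟨a, ha, b, hb, hadj⟩ := walk_cross G S w hi hj
  have hAab : A a b = 1 := by simp [hA, hadj]
  have := congrFun (congrFun hUAU a) b
  rw [mul_diagonal, diagonal_mul, hAab] at this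
  simp only [hu_def, ha, Finset.mem_compl.1 hb, if_pos, if_neg, if_true] at this
  norm_num at this

/-- If a simple connected graph has a signable Moore-Penrose pseudo-inverse, the weighted
pseudo-inverse graph (adjacency `D A† D`, resp. `−D A† D`) is connected (irreducible). -/
theorem stmt_3 {m : ℕ} (G : SimpleGraph (Fin m)) [DecidableRel G.Adj]
    (hconn : G.Connected) (A' : Matrix (Fin m) (Fin m) ℝ) (d : Fin m → ℝ)
    (hMP : IsMoorePenrose (G.adjMatrix ℝ) A') (hd : IsSign d) :
    ((∀ i j, 0 ≤ (Matrix.diagonal d * A' * Matrix.diagonal d) i j) →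
      MatIrreducible (Matrix.diagonal d * A' * Matrix.diagonal d)) ∧
    ((∀ i j, (Matrix.diagonal d * A' * Matrix.diagonal d) i j ≤ 0) →
      MatIrreducible (-(Matrix.diagonal d * A' * Matrix.diagonal d))) := by
  refine ⟨fun _ => core G hconn A' d hMP hd, fun _ => ?_⟩
  intro S hS hSu
  obtain ⟨i, hi, j, hj, h⟩ := core G hconn A' d hMP hd S hS hSu
  exact ⟨i, hi, j, hj, by simpa using h⟩
end

section
/- For the cycle graph C_m of order m ≡ 0 (mod 4), the Moore-Penrose inverse of its circulant adjacency matrix is the circulant symmetric matrix with entries a†_p = (1/m)(m/2 − |p|)(−1)^((|p|−1)/2) for p odd and a†_p = 0 for p even, where indices are taken modulo m. -/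
open Matrix

namespace Stmt4Aux

variable {m : ℕ} [NeZero m]

noncomputable def bfun (m : ℕ) [NeZero m] (q : ZMod m) : ℝ :=
  if Odd q.val then (1 / (m : ℝ)) * ((m : ℝ) / 2 - q.val) * (-1 : ℝ) ^ ((q.val - 1) / 2) else 0

noncomputable def cfun (m : ℕ) [NeZero m] (q : ZMod m) : ℝ :=
  if Even q.val then (-1 : ℝ) ^ (q.val / 2) else 0

noncomputable def gfun (m : ℕ) [NeZero m] (q : ZMod m) : ℝ :=
  if Odd q.val then ((m : ℝ) / 2 - q.val) else 0

lemma neg_one_pow_congr {a b : ℕ} (h : a % 2 = b % 2) : ((-1 : ℝ)) ^ a = (-1) ^ b := by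
  rcases Nat.even_or_odd a with ha | ha
  · have hb : Even b := by rw [Nat.even_iff] at *; omega
    rw [ha.neg_one_pow, hb.neg_one_pow]
  · have hb : Odd b := by rw [Nat.odd_iff] at *; omega
    rw [ha.neg_one_pow, hb.neg_one_pow]

lemma val_add_facts (a b : ZMod m) :
    a.val + b.val = (a + b).val ∨ a.val + b.val = (a + b).val + m := by
  have h := ZMod.val_add a b
  have ha := ZMod.val_lt a
  have hb := ZMod.val_lt b
  rcases lt_or_ge (a.val + b.val) m with h' | h'
  · left; rw [h, Nat.mod_eq_of_lt h']
  · right; rw [h, Nat.mod_eq_sub_mod h', Nat.mod_eq_of_lt (by omega)]; omega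

lemma val_add_parity (hm : m % 2 = 0) (a b : ZMod m) :
    (a + b).val % 2 = (a.val + b.val) % 2 := by
  rcases val_add_facts a b with h | h <;> omega

lemma val_one' (hm : 4 ≤ m) : (1 : ZMod m).val = 1 := by
  rw [← Nat.cast_one, ZMod.val_cast_of_lt (by omega)]

lemma val_add_one (hm : 4 ≤ m) (q : ZMod m) :
    (q + 1).val = if q.val = m - 1 then 0 else q.val + 1 := by
  have h := ZMod.val_add q 1
  rw [val_one' hm] at h
  have hv := ZMod.val_lt q
  split_ifs with h1
  · rw [h, h1, Nat.sub_add_cancel (by omega), Nat.mod_self]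
  · rw [h, Nat.mod_eq_of_lt (by omega)]

lemma val_sub_one (hm : 4 ≤ m) (q : ZMod m) :
    (q - 1).val = if q.val = 0 then m - 1 else q.val - 1 := by
  have hadd : (q - 1) + 1 = q := sub_add_cancel q 1
  have h := ZMod.val_add (q - 1) 1
  rw [val_one' hm, hadd] at h
  have hw := ZMod.val_lt (q - 1)
  have hv := ZMod.val_lt q
  rcases eq_or_lt_of_le (show (q - 1).val + 1 ≤ m by omega) with h2 | h2
  · rw [h2, Nat.mod_self] at h
    split_ifs with h0 <;> omega
  · rw [Nat.mod_eq_of_lt h2] at h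
    split_ifs with h0 <;> omega

lemma two_ne_zero' (hm : m % 4 = 0) : ((2 : ℕ) : ZMod m) ≠ 0 := by
  have hm4 : 4 ≤ m := by have := NeZero.ne m; omega
  intro h
  rw [ZMod.natCast_eq_zero_iff] at h
  have := Nat.le_of_dvd (by norm_num) h
  omega

lemma shift_ne (hm : m % 4 = 0) (i : ZMod m) : i - 1 ≠ i + 1 := by
  intro h
  apply two_ne_zero' hm
  push_cast
  linear_combination -h

/-- Right multiplication by the adjacency matrix is a shift-sum. -/
lemma mul_A (hm : m % 4 = 0) {A : Matrix (ZMod m) (ZMod m) ℝ}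
    (hA : ∀ i j, A i j = if i - j = 1 ∨ j - i = 1 then 1 else 0)
    (M : Matrix (ZMod m) (ZMod m) ℝ) (i j : ZMod m) :
    (M * A) i j = M i (j - 1) + M i (j + 1) := by
  rw [mul_apply]
  have hne : (j - 1) ≠ (j + 1) := shift_ne hm j
  have key : ∀ k : ZMod m, M i k * A k j =
      (if k = j - 1 then M i (j - 1) else 0) + (if k = j + 1 then M i (j + 1) else 0) := by
    intro k
    rw [hA]
    by_cases h1 : k = j - 1
    · subst h1
      have hc : j - (j - 1) = 1 := by ring
      rw [if_pos (Or.inr hc), if_pos rfl, if_neg hne]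
      ring
    · by_cases h2 : k = j + 1
      · subst h2
        have hc : j + 1 - j = 1 := by ring
        rw [if_pos (Or.inl hc), if_neg h1, if_pos rfl]
        ring
      · have hc : ¬(k - j = 1 ∨ j - k = 1) := by
          rintro (h | h)
          · exact h2 (by linear_combination h)
          · exact h1 (by linear_combination -h)
        rw [if_neg hc, if_neg h1, if_neg h2]
        ring
  rw [Finset.sum_congr rfl (fun k _ => key k), Finset.sum_add_distrib,
    Finset.sum_ite_eq' Finset.univ (j - 1) (fun _ => M i (j - 1)),
    Finset.sum_ite_eq' Finset.univ (j + 1) (fun _ => M i (j + 1))]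
  simp

/-- Left multiplication by the adjacency matrix is a shift-sum. -/
lemma A_mul (hm : m % 4 = 0) {A : Matrix (ZMod m) (ZMod m) ℝ}
    (hA : ∀ i j, A i j = if i - j = 1 ∨ j - i = 1 then 1 else 0)
    (M : Matrix (ZMod m) (ZMod m) ℝ) (i j : ZMod m) :
    (A * M) i j = M (i - 1) j + M (i + 1) j := by
  rw [mul_apply]
  have hne : (i - 1) ≠ (i + 1) := shift_ne hm i
  have key : ∀ k : ZMod m, A i k * M k j =
      (if k = i - 1 then M (i - 1) j else 0) + (if k = i + 1 then M (i + 1) j else 0) := by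
    intro k
    rw [hA]
    by_cases h1 : k = i - 1
    · subst h1
      have hc : i - (i - 1) = 1 := by ring
      rw [if_pos (Or.inl hc), if_pos rfl, if_neg hne]
      ring
    · by_cases h2 : k = i + 1
      · subst h2
        have hc : i + 1 - i = 1 := by ring
        rw [if_pos (Or.inr hc), if_neg h1, if_pos rfl]
        ring
      · have hc : ¬(i - k = 1 ∨ k - i = 1) := by
          rintro (h | h)
          · exact h1 (by linear_combination -h)
          · exact h2 (by linear_combination h)
        rw [if_neg hc, if_neg h1, if_neg h2]
        ring
  rw [Finset.sum_congr rfl (fun k _ => key k), Finset.sum_add_distrib,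
    Finset.sum_ite_eq' Finset.univ (i - 1) (fun _ => M (i - 1) j),
    Finset.sum_ite_eq' Finset.univ (i + 1) (fun _ => M (i + 1) j)]
  simp

/-- The min-formula entries equal the uniform formula `bfun`. -/
lemma min_eq_bfun (hm : m % 4 = 0) (q : ZMod m) :
    (if Odd (min q.val (m - q.val)) then
        (1 / (m : ℝ)) * ((m : ℝ) / 2 - (min q.val (m - q.val) : ℕ)) *
          (-1 : ℝ) ^ ((min q.val (m - q.val) - 1) / 2)
      else 0) = bfun m q := by
  have hm4 : 4 ≤ m := by have := NeZero.ne m; omega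
  have hv := ZMod.val_lt q
  set v := q.val with hvdef
  unfold bfun
  rcases le_or_gt v (m - v) with hle | hlt
  · rw [min_eq_left hle]
  · rw [min_eq_right hlt.le]
    by_cases hodd : Odd v
    · have hodd' : Odd (m - v) := by rw [Nat.odd_iff] at *; omega
      rw [if_pos hodd', if_pos hodd]
      have hcast : ((m - v : ℕ) : ℝ) = (m : ℝ) - v := by
        push_cast [Nat.cast_sub hv.le]; ring
      have hsign : ((-1 : ℝ)) ^ ((m - v - 1) / 2) = -((-1 : ℝ)) ^ ((v - 1) / 2) := by
        have h1 : ((-1 : ℝ)) ^ ((m - v - 1) / 2) = ((-1 : ℝ)) ^ ((v - 1) / 2 + 1) := by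
          apply neg_one_pow_congr
          rw [Nat.odd_iff] at hodd
          omega
        rw [h1, pow_succ]; ring
      rw [hcast, hsign]
      ring
    · have hodd' : ¬ Odd (m - v) := by rw [Nat.odd_iff] at *; omega
      rw [if_neg hodd', if_neg hodd]

lemma cfun_neg (hm : m % 4 = 0) (q : ZMod m) : cfun m (-q) = cfun m q := by
  by_cases hq : q = 0
  · rw [hq, neg_zero]
  · have hv := ZMod.val_lt q
    have hv0 : q.val ≠ 0 := fun h => hq (by rwa [← ZMod.val_eq_zero])
    have hneg : (-q).val = m - q.val := by rw [ZMod.neg_val, if_neg hq]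
    unfold cfun
    rw [hneg]
    by_cases he : Even q.val
    · have he' : Even (m - q.val) := by rw [Nat.even_iff] at *; omega
      rw [if_pos he', if_pos he]
      apply neg_one_pow_congr
      rw [Nat.even_iff] at he
      omega
    · have he' : ¬ Even (m - q.val) := by rw [Nat.even_iff] at *; omega
      rw [if_neg he', if_neg he]

/-- cfun is annihilated by the shift-sum. -/
lemma c_shift (hm : m % 4 = 0) (x : ZMod m) : cfun m (x - 1) + cfun m (x + 1) = 0 := by
  have hm4 : 4 ≤ m := by have := NeZero.ne m; omega
  have hv := ZMod.val_lt x
  have h1 := val_add_one hm4 x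
  have h2 := val_sub_one hm4 x
  unfold cfun
  by_cases hpar : x.val % 2 = 0
  · -- x even, neighbors odd
    have ho1 : ¬ Even ((x - 1).val) := by rw [Nat.even_iff]; split_ifs at h2 <;> omega
    have ho2 : ¬ Even ((x + 1).val) := by rw [Nat.even_iff]; split_ifs at h1 <;> omega
    rw [if_neg ho1, if_neg ho2]; ring
  · -- x odd
    have he1 : Even ((x - 1).val) := by rw [Nat.even_iff]; split_ifs at h2 <;> omega
    have he2 : Even ((x + 1).val) := by rw [Nat.even_iff]; split_ifs at h1 <;> omega
    rw [if_pos he1, if_pos he2]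
    have hs : ((-1 : ℝ)) ^ ((x + 1).val / 2) = ((-1 : ℝ)) ^ ((x - 1).val / 2 + 1) := by
      apply neg_one_pow_congr
      split_ifs at h1 h2 <;> omega
    rw [hs, pow_succ]
    ring

/-- The key convolution identity: `b(q-1) + b(q+1) = δ₀(q) - (2/m)·ε(q)`. -/
lemma key_conv (hm : m % 4 = 0) (q : ZMod m) :
    bfun m (q - 1) + bfun m (q + 1) =
      (if q = 0 then (1 : ℝ) else 0) - (2 / (m : ℝ)) * cfun m q := by
  have hm4 : 4 ≤ m := by have := NeZero.ne m; omega
  have hv := ZMod.val_lt q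
  have h1 := val_add_one hm4 q
  have h2 := val_sub_one hm4 q
  have hmR : (m : ℝ) ≠ 0 := Nat.cast_ne_zero.mpr (NeZero.ne m)
  have hq0 : q = 0 ↔ q.val = 0 := by rw [← ZMod.val_eq_zero]
  unfold bfun cfun
  by_cases hpar : q.val % 2 = 1
  · -- q odd: everything vanishes
    have ho1 : ¬ Odd ((q - 1).val) := by rw [Nat.odd_iff]; split_ifs at h2 <;> omega
    have ho2 : ¬ Odd ((q + 1).val) := by rw [Nat.odd_iff]; split_ifs at h1 <;> omega
    have hq : q ≠ 0 := fun h => by rw [hq0] at h; omega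
    have he : ¬ Even q.val := by rw [Nat.even_iff]; omega
    rw [if_neg ho1, if_neg ho2, if_neg hq, if_neg he]
    ring
  · by_cases hzero : q.val = 0
    · -- q = 0
      have hq : q = 0 := hq0.mpr hzero
      rw [if_pos hq]
      rw [hzero] at h1 h2
      rw [if_neg (by omega : ¬ (0 : ℕ) = m - 1)] at h1
      rw [if_pos rfl] at h2
      have ho1 : Odd ((q - 1).val) := by rw [Nat.odd_iff, h2]; omega
      have ho2 : Odd ((q + 1).val) := by rw [Nat.odd_iff, h1]
      have he : Even q.val := by rw [Nat.even_iff]; omega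
      rw [if_pos ho1, if_pos ho2, if_pos he, h1, h2, hzero]
      have hs1 : ((-1 : ℝ)) ^ ((m - 1 - 1) / 2) = -1 := by
        have : Odd ((m - 1 - 1) / 2) := by rw [Nat.odd_iff]; omega
        exact this.neg_one_pow
      have hcast : ((m - 1 : ℕ) : ℝ) = (m : ℝ) - 1 := by
        push_cast [Nat.cast_sub (by omega : 1 ≤ m)]; ring
      rw [hs1, hcast]
      push_cast
      field_simp
      ring
    · -- q even, nonzero
      have hq : q ≠ 0 := fun h => hzero (hq0.mp h)
      rw [if_neg hzero] at h2
      have hne : q.val ≠ m - 1 := by omega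
      rw [if_neg hne] at h1
      have ho1 : Odd ((q - 1).val) := by rw [Nat.odd_iff, h2]; omega
      have ho2 : Odd ((q + 1).val) := by rw [Nat.odd_iff, h1]; omega
      have he : Even q.val := by rw [Nat.even_iff]; omega
      rw [if_pos ho1, if_pos ho2, if_neg hq, if_pos he, h1, h2]
      have hs1 : ((-1 : ℝ)) ^ ((q.val - 1 - 1) / 2) = -((-1 : ℝ)) ^ (q.val / 2) := by
        have h' : ((-1 : ℝ)) ^ (q.val / 2) = ((-1 : ℝ)) ^ ((q.val - 1 - 1) / 2 + 1) := by
          apply neg_one_pow_congr; omega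
        rw [h', pow_succ]; ring
      have hs2 : ((q.val + 1 : ℕ) - 1) / 2 = q.val / 2 := by omega
      have hcast : ((q.val - 1 : ℕ) : ℝ) = (q.val : ℝ) - 1 := by
        push_cast [Nat.cast_sub (by omega : 1 ≤ q.val)]; ring
      rw [hs1, hs2, hcast]
      push_cast
      ring

lemma gsum (hm : m % 4 = 0) : ∑ q : ZMod m, gfun m q = 0 := by
  have h := Equiv.sum_comp (Equiv.neg (ZMod m)) (gfun m)
  have h2 : ∀ q : ZMod m, gfun m q + gfun m (-q) = 0 := by
    intro q
    unfold gfun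
    by_cases hq : Odd q.val
    · have hq0 : q ≠ 0 := by
        intro h0
        rw [h0, ZMod.val_zero] at hq
        simp [Nat.odd_iff] at hq
      have hv := ZMod.val_lt q
      have hneg : (-q).val = m - q.val := by rw [ZMod.neg_val, if_neg hq0]
      have hodd' : Odd ((-q).val) := by
        rw [hneg, Nat.odd_iff]
        rw [Nat.odd_iff] at hq
        omega
      rw [if_pos hq, if_pos hodd', hneg]
      rw [Nat.cast_sub hv.le]
      ring
    · have hodd' : ¬ Odd ((-q).val) := by
        by_cases hq0 : q = 0
        · rw [hq0, neg_zero, ZMod.val_zero]; decide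
        · have hneg : (-q).val = m - q.val := by rw [ZMod.neg_val, if_neg hq0]
          have hv := ZMod.val_lt q
          rw [hneg, Nat.odd_iff]
          rw [Nat.odd_iff] at hq
          omega
      rw [if_neg hq, if_neg hodd']
      ring
  have h3 : ∑ q : ZMod m, (gfun m q + gfun m (-q)) = 0 := by
    rw [Finset.sum_congr rfl (fun q _ => h2 q)]
    simp
  rw [Finset.sum_add_distrib] at h3
  have h4 : ∑ q : ZMod m, gfun m (-q) = ∑ q : ZMod m, gfun m q := by
    exact Equiv.sum_comp (Equiv.neg (ZMod m)) (gfun m)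
  rw [h4] at h3
  linarith

lemma sumS (hm : m % 4 = 0) (x : ZMod m) :
    ∑ k : ZMod m, bfun m (x - k) * cfun m k = 0 := by
  have hm4 : 4 ≤ m := by have := NeZero.ne m; omega
  by_cases hx : Odd x.val
  · have key : ∀ k : ZMod m, bfun m (x - k) * cfun m k
        = ((1 / (m : ℝ)) * (-1 : ℝ) ^ ((x.val - 1) / 2)) * gfun m (x - k) := by
      intro k
      have hadd : (x - k) + k = x := sub_add_cancel x k
      have hpar := val_add_parity (by omega : m % 2 = 0) (x - k) k
      rw [hadd] at hpar
      have hfacts := val_add_facts (x - k) k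
      rw [hadd] at hfacts
      rw [Nat.odd_iff] at hx
      by_cases hk : Even k.val
      · rw [Nat.even_iff] at hk
        have ho : Odd ((x - k).val) := by rw [Nat.odd_iff]; omega
        unfold bfun cfun gfun
        rw [if_pos ho, if_pos (Nat.even_iff.mpr hk), if_pos ho]
        have hs : ((-1 : ℝ)) ^ (((x - k).val - 1) / 2) * (-1 : ℝ) ^ (k.val / 2)
            = (-1 : ℝ) ^ ((x.val - 1) / 2) := by
          rw [← pow_add]
          apply neg_one_pow_congr
          rw [Nat.odd_iff] at ho
          omega
        linear_combination ((1 / (m : ℝ)) * ((m : ℝ) / 2 - (((x - k).val : ℕ) : ℝ))) * hs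
      · rw [Nat.even_iff] at hk
        have ho : ¬ Odd ((x - k).val) := by rw [Nat.odd_iff]; omega
        unfold bfun cfun gfun
        rw [if_neg ho, if_neg (by rw [Nat.even_iff]; omega : ¬ Even k.val), if_neg ho]
        ring
    rw [Finset.sum_congr rfl (fun k _ => key k), ← Finset.mul_sum]
    have hre : ∑ k : ZMod m, gfun m (x - k) = ∑ q : ZMod m, gfun m q :=
      Equiv.sum_comp (Equiv.subLeft x) (gfun m)
    rw [hre, gsum hm, mul_zero]
  · apply Finset.sum_eq_zero
    intro k _
    rw [Nat.odd_iff] at hx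
    have hpar := val_add_parity (by omega : m % 2 = 0) (x - k) k
    rw [sub_add_cancel] at hpar
    by_cases hk : Even k.val
    · rw [Nat.even_iff] at hk
      have ho : ¬ Odd ((x - k).val) := by rw [Nat.odd_iff]; omega
      unfold bfun
      rw [if_neg ho, zero_mul]
    · unfold cfun
      rw [if_neg hk, mul_zero]

end Stmt4Aux

open Stmt4Aux in
/-- For the cycle `C_m` with `m ≡ 0 (mod 4)`, the Moore-Penrose inverse of the circulant
adjacency matrix is the circulant symmetric matrix with entries
`a†_p = (1/m)(m/2 − |p|)(−1)^((|p|−1)/2)` for `p` odd and `a†_p = 0` for `p` even,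
where `|p| = min((i−j).val, m − (i−j).val)` is the absolute value of the residue `i−j`. -/
theorem stmt_4 (m : ℕ) [NeZero m] (h4 : m % 4 = 0)
    (A : Matrix (ZMod m) (ZMod m) ℝ)
    (hA : ∀ i j, A i j = if i - j = 1 ∨ j - i = 1 then 1 else 0) :
    IsMoorePenrose A (Matrix.of fun i j =>
      if Odd (min ((i - j).val) (m - (i - j).val)) then
        (1 / (m : ℝ)) * ((m : ℝ) / 2 - (min ((i - j).val) (m - (i - j).val) : ℕ)) *
          (-1 : ℝ) ^ ((min ((i - j).val) (m - (i - j).val) - 1) / 2)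
      else 0) := by
  have hBeq : (Matrix.of fun i j =>
      if Odd (min ((i - j).val) (m - (i - j).val)) then
        (1 / (m : ℝ)) * ((m : ℝ) / 2 - (min ((i - j).val) (m - (i - j).val) : ℕ)) *
          (-1 : ℝ) ^ ((min ((i - j).val) (m - (i - j).val) - 1) / 2)
      else 0) = (Matrix.of fun i j => bfun m (i - j)) := by
    ext i j
    simp only [Matrix.of_apply]
    exact min_eq_bfun h4 (i - j)
  rw [hBeq]
  set B : Matrix (ZMod m) (ZMod m) ℝ := Matrix.of fun i j => bfun m (i - j) with hBdef
  set P : Matrix (ZMod m) (ZMod m) ℝ :=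
    Matrix.of fun i j => (if i = j then (1 : ℝ) else 0) - (2 / (m : ℝ)) * cfun m (i - j)
    with hPdef
  have hAB : A * B = P := by
    ext i j
    rw [A_mul h4 hA B i j]
    simp only [hBdef, hPdef, Matrix.of_apply]
    have e1 : i - 1 - j = (i - j) - 1 := by ring
    have e2 : i + 1 - j = (i - j) + 1 := by ring
    rw [e1, e2, key_conv h4 (i - j)]
    simp [sub_eq_zero]
  have hBA : B * A = P := by
    ext i j
    rw [mul_A h4 hA B i j]
    simp only [hBdef, hPdef, Matrix.of_apply]
    have e1 : i - (j - 1) = (i - j) + 1 := by ring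
    have e2 : i - (j + 1) = (i - j) - 1 := by ring
    rw [e1, e2, add_comm, key_conv h4 (i - j)]
    simp [sub_eq_zero]
  have hPt : Pᵀ = P := by
    ext i j
    simp only [hPdef, Matrix.transpose_apply, Matrix.of_apply]
    have e1 : j - i = -(i - j) := by ring
    rw [e1, cfun_neg h4]
    simp [eq_comm]
  have hPA : P * A = A := by
    ext i j
    rw [mul_A h4 hA P i j]
    simp only [hPdef, Matrix.of_apply]
    have e1 : i - (j - 1) = (i - j) + 1 := by ring
    have e2 : i - (j + 1) = (i - j) - 1 := by ring
    rw [e1, e2]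
    have hc := c_shift h4 (i - j)
    have hδ : (if i = j - 1 then (1 : ℝ) else 0) + (if i = j + 1 then (1 : ℝ) else 0)
        = A i j := by
      rw [hA i j]
      by_cases h1 : i = j - 1
      · have hor : j - i = 1 := by rw [h1]; ring
        have hne : i ≠ j + 1 := by
          rw [h1]; exact shift_ne h4 j
        rw [if_pos h1, if_neg hne, if_pos (Or.inr hor)]
        ring
      · by_cases h2 : i = j + 1
        · have hor : i - j = 1 := by rw [h2]; ring
          rw [if_neg h1, if_pos h2, if_pos (Or.inl hor)]
          ring
        · have hor : ¬(i - j = 1 ∨ j - i = 1) := by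
            rintro (h | h)
            · exact h2 (by linear_combination h)
            · exact h1 (by linear_combination -h)
          rw [if_neg h1, if_neg h2, if_neg hor]
          ring
    linear_combination hδ - (2 / (m : ℝ)) * hc
  have hBP : B * P = B := by
    ext i j
    rw [mul_apply]
    simp only [hBdef, hPdef, Matrix.of_apply]
    have key : ∀ k : ZMod m, bfun m (i - k) *
        ((if k = j then (1 : ℝ) else 0) - (2 / (m : ℝ)) * cfun m (k - j))
        = (if k = j then bfun m (i - j) else 0)
          - (2 / (m : ℝ)) * (bfun m (i - k) * cfun m (k - j)) := by
      intro k
      by_cases hk : k = j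
      · subst hk; rw [if_pos rfl, if_pos rfl]; ring
      · rw [if_neg hk, if_neg hk]; ring
    rw [Finset.sum_congr rfl (fun k _ => key k), Finset.sum_sub_distrib,
      Finset.sum_ite_eq' Finset.univ j (fun _ => bfun m (i - j)), ← Finset.mul_sum]
    have hre : ∑ k : ZMod m, bfun m (i - k) * cfun m (k - j)
        = ∑ k : ZMod m, bfun m ((i - j) - k) * cfun m k := by
      rw [← Equiv.sum_comp (Equiv.addRight j)
        (fun k => bfun m (i - k) * cfun m (k - j))]
      apply Finset.sum_congr rfl
      intro k _
      simp only [Equiv.coe_addRight]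
      have e1 : i - (k + j) = (i - j) - k := by ring
      have e2 : k + j - j = k := by ring
      rw [e1, e2]
    rw [hre, sumS h4 (i - j), mul_zero]
    simp
  refine ⟨?_, ?_, ?_, ?_⟩
  · rw [hAB]; exact hPt
  · rw [hBA]; exact hPt
  · rw [hAB]; exact hPA
  · rw [mul_assoc, hAB]; exact hBP
end

section
/- The cycle graph C_m of order m ≥ 3 with m ≠ 4 is neither positively nor negatively pseudo-invertible; i.e., there is no ±1 diagonal signature matrix D such that DA†D is entrywise nonnegative or entrywise nonpositive, where A is the adjacency matrix of C_m. -/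
set_option linter.unusedSectionVars false
set_option maxHeartbeats 1000000

open Matrix Finset

namespace CycleMP

variable {m : ℕ} [NeZero m]

/-! ### Elementary `ZMod` value lemmas -/

lemma zz_two_ne_zero (hm : 3 ≤ m) : (2 : ZMod m) ≠ 0 := by
  intro h
  have h2 : ((2 : ℕ) : ZMod m) = 2 := by push_cast; ring
  have := ZMod.val_cast_of_lt (show 2 < m by omega)
  rw [h2, h, ZMod.val_zero] at this
  omega

lemma valneg1 (hm : 3 ≤ m) : (-1 : ZMod m).val = m - 1 := by
  have h1 : ((m - 1 : ℕ) : ZMod m) = -1 := by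
    push_cast [Nat.cast_sub (by omega : 1 ≤ m)]
    simp
  rw [← h1, ZMod.val_cast_of_lt (by omega)]

lemma val_sub_one (hm : 3 ≤ m) (k : ZMod m) :
    (k - 1).val = if k = 0 then m - 1 else k.val - 1 := by
  have h : k - 1 = k + (-1) := by ring
  rw [h, ZMod.val_add, valneg1 hm]
  have hk := ZMod.val_lt k
  by_cases h0 : k = 0
  · simp [h0, Nat.mod_eq_of_lt (by omega : m - 1 < m)]
  · have hvne : k.val ≠ 0 := by simpa [ZMod.val_eq_zero] using h0
    simp only [if_neg h0]
    have e : k.val + (m - 1) = (k.val - 1) + m := by omega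
    rw [e, Nat.add_mod_right, Nat.mod_eq_of_lt (by omega)]

lemma val_add_one (hm : 3 ≤ m) (k : ZMod m) :
    (k + 1).val = if k.val = m - 1 then 0 else k.val + 1 := by
  haveI : Fact (1 < m) := ⟨by omega⟩
  rw [ZMod.val_add, ZMod.val_one]
  have hk := ZMod.val_lt k
  by_cases h0 : k.val = m - 1
  · simp only [if_pos h0, h0]
    have : m - 1 + 1 = m := by omega
    simp [this]
  · rw [Nat.mod_eq_of_lt (by omega)]
    simp [h0]

lemma val_sub_modeq (x y : ZMod m) : ((x - y).val + y.val) ≡ x.val [MOD m] := by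
  show ((x - y).val + y.val) % m = x.val % m
  rw [← ZMod.val_add, sub_add_cancel, Nat.mod_eq_of_lt (ZMod.val_lt _)]

/-! ### Sum reindexing helpers -/

lemma zsum_eq_range (f : ZMod m → ℝ) :
    ∑ l : ZMod m, f l = ∑ n ∈ Finset.range m, f (n : ZMod m) := by
  rw [← Fin.sum_univ_eq_sum_range (fun n => f (n : ZMod m)) m]
  apply Fintype.sum_bijective (fun x : ZMod m => (⟨x.val, x.val_lt⟩ : Fin m))
  · constructor
    · intro a b hab
      exact ZMod.val_injective _ (congrArg Fin.val hab)
    · intro ⟨n, hn⟩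
      exact ⟨(n : ZMod m), by simp [ZMod.val_cast_of_lt hn]⟩
  · intro x
    simp [ZMod.natCast_val, ZMod.cast_id]

lemma sum_range_pair (n : ℕ) (f : ℕ → ℝ) :
    ∑ i ∈ Finset.range (2 * n), f i = ∑ t ∈ Finset.range n, (f (2 * t) + f (2 * t + 1)) := by
  induction n with
  | zero => simp
  | succ k ih =>
    have e : 2 * (k + 1) = (2 * k) + 1 + 1 := by ring
    rw [e, Finset.sum_range_succ, Finset.sum_range_succ, ih, Finset.sum_range_succ]
    ring

lemma sum_linear (n : ℕ) (a : ℝ) :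
    ∑ t ∈ Finset.range n, (a - 4 * (t : ℝ)) = n * a - 2 * n * (n - 1) := by
  induction n with
  | zero => simp
  | succ k ih =>
    rw [Finset.sum_range_succ, ih]
    push_cast
    ring

/-! ### Structure lemmas for the adjacency matrix -/

lemma mulA_left (hm : 3 ≤ m) (A : Matrix (ZMod m) (ZMod m) ℝ)
    (hA : ∀ i j, A i j = if i - j = 1 ∨ j - i = 1 then 1 else 0)
    (M : Matrix (ZMod m) (ZMod m) ℝ) (i j : ZMod m) :
    (A * M) i j = M (i - 1) j + M (i + 1) j := by
  rw [Matrix.mul_apply]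
  have hne : i - 1 ≠ i + 1 := by
    intro h
    exact zz_two_ne_zero hm (by linear_combination -h)
  have hsplit : ∀ k : ZMod m, A i k * M k j =
      (if k = i - 1 then M k j else 0) + (if k = i + 1 then M k j else 0) := by
    intro k
    rw [hA]
    by_cases h1 : k = i - 1
    · have c1 : i - k = 1 := by rw [h1]; ring
      simp [c1, h1, hne]
    · by_cases h2 : k = i + 1
      · have c1 : k - i = 1 := by rw [h2]; ring
        simp [c1, h1, h2, Ne.symm hne]
      · have c1 : i - k ≠ 1 := fun h => h1 (by linear_combination -h)
        have c2 : k - i ≠ 1 := fun h => h2 (by linear_combination h)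
        simp [c1, c2, h1, h2]
  simp only [hsplit]
  rw [Finset.sum_add_distrib, Finset.sum_ite_eq' univ (i-1) (fun k => M k j),
    Finset.sum_ite_eq' univ (i+1) (fun k => M k j)]
  simp

lemma mulA_right (hm : 3 ≤ m) (A : Matrix (ZMod m) (ZMod m) ℝ)
    (hA : ∀ i j, A i j = if i - j = 1 ∨ j - i = 1 then 1 else 0)
    (M : Matrix (ZMod m) (ZMod m) ℝ) (i j : ZMod m) :
    (M * A) i j = M i (j - 1) + M i (j + 1) := by
  rw [Matrix.mul_apply]
  have hne : j - 1 ≠ j + 1 := by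
    intro h
    exact zz_two_ne_zero hm (by linear_combination -h)
  have hsplit : ∀ k : ZMod m, M i k * A k j =
      (if k = j - 1 then M i k else 0) + (if k = j + 1 then M i k else 0) := by
    intro k
    rw [hA]
    by_cases h1 : k = j - 1
    · have c1 : j - k = 1 := by rw [h1]; ring
      simp [c1, h1, hne]
    · by_cases h2 : k = j + 1
      · have c1 : k - j = 1 := by rw [h2]; ring
        simp [c1, h1, h2, Ne.symm hne]
      · have c1 : j - k ≠ 1 := fun h => h1 (by linear_combination -h)
        have c2 : k - j ≠ 1 := fun h => h2 (by linear_combination h)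
        simp [c1, c2, h1, h2]
  simp only [hsplit]
  rw [Finset.sum_add_distrib, Finset.sum_ite_eq' univ (j-1) (fun k => M i k),
    Finset.sum_ite_eq' univ (j+1) (fun k => M i k)]
  simp

/-! ### Uniqueness of the Moore-Penrose inverse -/

lemma mp_unique {A X B : Matrix (ZMod m) (ZMod m) ℝ}
    (hX : IsMoorePenrose A X) (hB : IsMoorePenrose A B) : X = B := by
  obtain ⟨hx1, hx2, hx3, hx4⟩ := hX
  obtain ⟨hb1, hb2, hb3, hb4⟩ := hB
  have hb3' : A * (B * A) = A := by rw [← Matrix.mul_assoc]; exact hb3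
  have e1 : X = X * (A * B) := by
    calc X = X * A * X := hx4.symm
    _ = X * (A * X)ᵀ := by rw [hx1, Matrix.mul_assoc]
    _ = X * (Xᵀ * Aᵀ) := by rw [Matrix.transpose_mul]
    _ = X * (Xᵀ * (A * (B * A))ᵀ) := by rw [hb3']
    _ = X * (Xᵀ * ((B * A)ᵀ * Aᵀ)) := by rw [Matrix.transpose_mul A (B*A)]
    _ = X * (Xᵀ * (Aᵀ * Bᵀ * Aᵀ)) := by rw [Matrix.transpose_mul B A]
    _ = (X * (Xᵀ * Aᵀ)) * (Bᵀ * Aᵀ) := by simp only [Matrix.mul_assoc]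
    _ = (X * (A * X)ᵀ) * (A * B)ᵀ := by rw [Matrix.transpose_mul A X, Matrix.transpose_mul A B]
    _ = (X * (A * X)) * (A * B) := by rw [hx1, hb1]
    _ = (X * A * X) * (A * B) := by simp only [Matrix.mul_assoc]
    _ = X * (A * B) := by rw [hx4]
  have e2 : X = (B * A) * X := by
    calc X = X * A * X := hx4.symm
    _ = (X * A)ᵀ * X := by rw [hx2]
    _ = Aᵀ * Xᵀ * X := by rw [Matrix.transpose_mul]
    _ = (A * (B * A))ᵀ * Xᵀ * X := by rw [hb3']
    _ = (B * A)ᵀ * Aᵀ * Xᵀ * X := by rw [Matrix.transpose_mul A (B*A)]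
    _ = (B * A) * (Aᵀ * Xᵀ) * X := by rw [hb2, Matrix.mul_assoc (B*A)]
    _ = (B * A) * (X * A)ᵀ * X := by rw [Matrix.transpose_mul]
    _ = (B * A) * (X * A) * X := by rw [hx2]
    _ = B * (A * X * A) * X := by simp only [Matrix.mul_assoc]
    _ = B * A * X := by rw [hx3]
  calc X = B * A * X := e2
  _ = B * A * (X * (A * B)) := by rw [← e1]
  _ = B * (A * X * A) * B := by simp only [Matrix.mul_assoc]
  _ = B * A * B := by rw [hx3]
  _ = B := hb4

/-! ### A circulant candidate satisfying suitable convolution identities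
is the Moore-Penrose inverse -/

lemma circulant_mp (hm : 3 ≤ m) (A : Matrix (ZMod m) (ZMod m) ℝ)
    (hA : ∀ i j, A i j = if i - j = 1 ∨ j - i = 1 then 1 else 0)
    (c pp : ZMod m → ℝ)
    (hconv : ∀ k, c (k - 1) + c (k + 1) = pp k)
    (hppeven : ∀ k, pp (-k) = pp k)
    (hppA : ∀ k, pp (k - 1) + pp (k + 1) = if k = 1 ∨ k = -1 then 1 else 0)
    (hPB : ∀ k, (∑ l : ZMod m, pp (k - l) * c l) = c k) :
    IsMoorePenrose A (Matrix.of fun i j => c (i - j)) := by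
  set B : Matrix (ZMod m) (ZMod m) ℝ := Matrix.of fun i j => c (i - j) with hB
  set P : Matrix (ZMod m) (ZMod m) ℝ := Matrix.of fun i j => pp (i - j) with hP
  have hBapp : ∀ i j, B i j = c (i - j) := fun i j => rfl
  have hPapp : ∀ i j, P i j = pp (i - j) := fun i j => rfl
  have hAB : A * B = P := by
    ext i j
    rw [mulA_left hm A hA B i j, hBapp, hBapp, hPapp]
    have e1 : i - 1 - j = (i - j) - 1 := by ring
    have e2 : i + 1 - j = (i - j) + 1 := by ring
    rw [e1, e2, hconv]
  have hBA : B * A = P := by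
    ext i j
    rw [mulA_right hm A hA B i j, hBapp, hBapp, hPapp]
    have e1 : i - (j - 1) = (i - j) + 1 := by ring
    have e2 : i - (j + 1) = (i - j) - 1 := by ring
    rw [e1, e2, add_comm, hconv]
  have hPt : Pᵀ = P := by
    ext i j
    rw [Matrix.transpose_apply, hPapp, hPapp]
    have e : j - i = -(i - j) := by ring
    rw [e, hppeven]
  have hPA : P * A = A := by
    ext i j
    rw [mulA_right hm A hA P i j, hPapp, hPapp, hA]
    have e1 : i - (j - 1) = (i - j) + 1 := by ring
    have e2 : i - (j + 1) = (i - j) - 1 := by ring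
    rw [e1, e2, add_comm, hppA]
    congr 1
    · simp only [eq_iff_iff]
      constructor
      · rintro (h | h)
        · left; exact h
        · right; linear_combination -h
      · rintro (h | h)
        · left; exact h
        · right; linear_combination -h
  have hPB' : P * B = B := by
    ext i j
    rw [Matrix.mul_apply]
    have e : ∀ k : ZMod m, P i k * B k j = pp ((i - j) - (k - j)) * c (k - j) := by
      intro k
      rw [hPapp, hBapp]
      congr 2
      ring
    simp only [e]
    rw [hBapp, ← hPB (i - j)]
    exact Fintype.sum_equiv (Equiv.subRight j) _ _ (fun k => rfl)
  refine ⟨?_, ?_, ?_, ?_⟩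
  · rw [hAB, hPt]
  · rw [hBA, hPt]
  · rw [hAB, hPA]
  · rw [hBA, hPB']

/-! ### The odd case -/

def tOdd (m : ℕ) (r : ZMod m) : ℕ := ((r.val + (m - 1)) * ((m + 1) / 2)) % m

noncomputable def cOdd (m : ℕ) (r : ZMod m) : ℝ := (-1 : ℝ) ^ (tOdd m r) / 2

lemma tOdd_step (hm : 3 ≤ m) (hodd : m % 2 = 1) (r : ZMod m) :
    tOdd m (r + 2) = (tOdd m r + 1) % m := by
  set h := (m + 1) / 2 with hh
  have h2v : (2 : ZMod m).val = 2 := by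
    have : ((2 : ℕ) : ZMod m) = 2 := by push_cast; ring
    rw [← this, ZMod.val_cast_of_lt (by omega)]
  have hval : (r + 2).val = (r.val + 2) % m := by rw [ZMod.val_add, h2v]
  have h2h : 2 * h = m + 1 := by omega
  have hX : (((r.val + 2) % m + (m - 1)) * h) ≡ ((r.val + (m - 1)) * h + 1) [MOD m] := by
    calc ((r.val + 2) % m + (m - 1)) * h
        ≡ ((r.val + 2) + (m - 1)) * h [MOD m] := ((Nat.mod_modEq _ m).add_right _).mul_right _
      _ = (r.val + (m - 1)) * h + 2 * h := by ring
      _ = (r.val + (m - 1)) * h + (m + 1) := by rw [h2h]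
      _ ≡ (r.val + (m - 1)) * h + 1 [MOD m] := Nat.ModEq.add_left _ (Nat.add_mod_left m 1)
  have hY : ((r.val + (m - 1)) * h) % m + 1 ≡ (r.val + (m - 1)) * h + 1 [MOD m] :=
    (Nat.mod_modEq _ m).add_right 1
  show (((r + 2).val + (m - 1)) * h) % m = (((r.val + (m - 1)) * h) % m + 1) % m
  rw [hval]
  exact hX.trans hY.symm

lemma tOdd_neg_one (hm : 3 ≤ m) (hodd : m % 2 = 1) : tOdd m (-1) = m - 1 := by
  unfold tOdd
  rw [valneg1 hm]
  have h2h : 2 * ((m + 1) / 2) = m + 1 := by omega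
  have e1 : (m - 1 + (m - 1)) * ((m + 1) / 2) = (m - 1) * (m + 1) := by
    have e : m - 1 + (m - 1) = 2 * (m - 1) := by omega
    rw [e, Nat.mul_comm 2 (m-1), Nat.mul_assoc, h2h]
  rw [e1]
  have e2 : (m - 1) * (m + 1) = (m - 1) + (m - 1) * m := by ring
  rw [e2, Nat.add_mul_mod_self_right, Nat.mod_eq_of_lt (by omega)]

lemma tOdd_eq_iff (hm : 3 ≤ m) (hodd : m % 2 = 1) (r : ZMod m)
    (ht : tOdd m r = m - 1) : r = -1 := by
  set h := (m + 1) / 2 with hh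
  have h2h : 2 * h = m + 1 := by omega
  have h1 : (r.val + (m - 1)) * h ≡ (m - 1 + (m - 1)) * h [MOD m] := by
    have ha : (r.val + (m - 1)) * h ≡ m - 1 [MOD m] := by
      unfold tOdd at ht
      calc (r.val + (m - 1)) * h ≡ ((r.val + (m - 1)) * h) % m [MOD m] := (Nat.mod_modEq _ m).symm
        _ = m - 1 := ht
    have hb : (m - 1 + (m - 1)) * h ≡ m - 1 [MOD m] := by
      have hteq := tOdd_neg_one (m := m) hm hodd
      unfold tOdd at hteq
      rw [valneg1 hm] at hteq
      calc (m - 1 + (m - 1)) * h ≡ ((m - 1 + (m - 1)) * h) % m [MOD m] := (Nat.mod_modEq _ m).symm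
        _ = m - 1 := hteq
    exact ha.trans hb.symm
  have h2 : (r.val + (m - 1)) * (2 * h) ≡ (m - 1 + (m - 1)) * (2 * h) [MOD m] := by
    calc (r.val + (m - 1)) * (2 * h) = ((r.val + (m - 1)) * h) * 2 := by ring
      _ ≡ ((m - 1 + (m - 1)) * h) * 2 [MOD m] := h1.mul_right 2
      _ = (m - 1 + (m - 1)) * (2 * h) := by ring
  rw [h2h] at h2
  have h3 : (r.val + (m - 1)) ≡ (m - 1 + (m - 1)) [MOD m] := by
    have ha : (r.val + (m - 1)) * (m + 1) ≡ (r.val + (m - 1)) * 1 [MOD m] :=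
      Nat.ModEq.mul_left _ (by simpa using (Nat.add_mod_left m 1))
    have hb : (m - 1 + (m - 1)) * (m + 1) ≡ (m - 1 + (m - 1)) * 1 [MOD m] :=
      Nat.ModEq.mul_left _ (by simpa using (Nat.add_mod_left m 1))
    simpa using (ha.symm.trans h2).trans hb
  have h4 : r.val ≡ m - 1 [MOD m] := (Nat.ModEq.add_right_cancel' _ h3)
  have h5 : r.val = m - 1 := by
    have := ZMod.val_lt r
    have h6 : r.val % m = (m - 1) % m := h4
    rw [Nat.mod_eq_of_lt (by omega), Nat.mod_eq_of_lt (by omega)] at h6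
    exact h6
  have h7 : r = ((m - 1 : ℕ) : ZMod m) := by
    rw [← h5, ZMod.natCast_val, ZMod.cast_id]
  rw [h7]
  push_cast [Nat.cast_sub (by omega : 1 ≤ m)]
  simp

lemma cOdd_conv (hm : 3 ≤ m) (hodd : m % 2 = 1) (k : ZMod m) :
    cOdd m (k - 1) + cOdd m (k + 1) = if k = 0 then 1 else 0 := by
  have hk1 : k + 1 = (k - 1) + 2 := by ring
  by_cases h0 : k = 0
  · subst h0
    have e1 : (0 : ZMod m) - 1 = -1 := by ring
    rw [hk1, e1]
    unfold cOdd
    rw [tOdd_step hm hodd, tOdd_neg_one hm hodd]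
    have e3 : (m - 1 + 1) % m = 0 := by
      have : m - 1 + 1 = m := by omega
      simp [this]
    rw [e3]
    have he : Even (m - 1) := Nat.even_iff.mpr (by omega)
    rw [he.neg_one_pow]
    norm_num
  · have hne : k - 1 ≠ -1 := by
      intro h
      exact h0 (by linear_combination h)
    have ht : tOdd m (k - 1) ≠ m - 1 := fun h => hne (tOdd_eq_iff hm hodd _ h)
    have htlt : tOdd m (k - 1) < m := Nat.mod_lt _ (by omega)
    have hstep : tOdd m ((k - 1) + 2) = tOdd m (k - 1) + 1 := by
      rw [tOdd_step hm hodd, Nat.mod_eq_of_lt (by omega)]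
    rw [hk1]
    unfold cOdd
    rw [hstep, if_neg h0, pow_succ]
    ring

lemma cOdd_one (hm : 3 ≤ m) (hodd : m % 2 = 1) : cOdd m 1 = 1 / 2 := by
  unfold cOdd tOdd
  haveI : Fact (1 < m) := ⟨by omega⟩
  rw [ZMod.val_one]
  have e : (1 + (m - 1)) = m := by omega
  rw [e, Nat.mul_mod_right]
  norm_num

/-! ### The even cases : the circulant kernels -/

noncomputable def qF (m : ℕ) (r : ZMod m) : ℝ :=
  if r.val % 4 = 0 then 1 else if r.val % 4 = 2 then -1 else 0

noncomputable def cTwo (m : ℕ) (r : ZMod m) : ℝ :=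
  if r.val % 2 = 1 then (-1 : ℝ) ^ ((r.val - 1) / 2) / 2 else 0

noncomputable def cFour (m : ℕ) (r : ZMod m) : ℝ :=
  if r.val % 2 = 1 then
    (-1 : ℝ) ^ ((r.val - 1) / 2) * ((m : ℝ) - 2 - 4 * (((r.val - 1) / 2 : ℕ) : ℝ)) / (2 * m)
  else 0

lemma cTwo_conv (hm : 3 ≤ m) (h4 : m % 4 = 2) (k : ZMod m) :
    cTwo m (k - 1) + cTwo m (k + 1) = if k = 0 then 1 else 0 := by
  have hv := ZMod.val_lt k
  unfold cTwo
  rw [val_sub_one hm k, val_add_one hm k]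
  by_cases h0 : k = 0
  · have hval0 : k.val = 0 := by simp [h0]
    rw [if_pos h0, hval0, if_neg (by omega : ¬ (0 : ℕ) = m - 1)]
    rw [if_pos (by omega : (m - 1) % 2 = 1), if_pos (by norm_num : 1 % 2 = 1)]
    have he : Even ((m - 1 - 1) / 2) := Nat.even_iff.mpr (by omega)
    rw [he.neg_one_pow]
    simp [h0]
    norm_num
  · have hval0 : k.val ≠ 0 := by simpa [ZMod.val_eq_zero] using h0
    rw [if_neg h0]
    by_cases hpar : k.val % 2 = 1
    · rw [if_neg (by omega : ¬ (k.val - 1) % 2 = 1)]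
      by_cases htop : k.val = m - 1
      · rw [if_pos htop, if_neg (by omega : ¬ (0:ℕ) % 2 = 1)]
        simp [h0]
      · rw [if_neg htop, if_neg (by omega : ¬ (k.val + 1) % 2 = 1)]
        simp [h0]
    · have hne : k.val ≠ m - 1 := by omega
      rw [if_neg hne]
      rw [if_pos (by omega : (k.val - 1) % 2 = 1), if_pos (by omega : (k.val + 1) % 2 = 1)]
      have e1 : (k.val - 1 - 1) / 2 = k.val / 2 - 1 := by omega
      have e2 : (k.val + 1 - 1) / 2 = k.val / 2 := by omega
      have hs : 1 ≤ k.val / 2 := by omega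
      rw [e1, e2]
      have hpow : (-1 : ℝ) ^ (k.val / 2) = (-1 : ℝ) ^ (k.val / 2 - 1) * (-1) := by
        conv_lhs => rw [show k.val / 2 = (k.val / 2 - 1) + 1 by omega]
        rw [pow_succ]
      rw [hpow, if_neg h0]
      ring

lemma cTwo_one (hm : 3 ≤ m) : cTwo m 1 = 1 / 2 := by
  haveI : Fact (1 < m) := ⟨by omega⟩
  unfold cTwo
  rw [ZMod.val_one]
  norm_num

lemma cFour_conv (hm : 8 ≤ m) (h4 : m % 4 = 0) (k : ZMod m) :
    cFour m (k - 1) + cFour m (k + 1)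
      = (if k = 0 then 1 else 0) - (2 / m) * qF m k := by
  have hm3 : 3 ≤ m := by omega
  have hv := ZMod.val_lt k
  have hmR : (0:ℝ) < (m:ℝ) := by positivity
  unfold cFour qF
  rw [val_sub_one hm3 k, val_add_one hm3 k]
  by_cases h0 : k = 0
  · have hval0 : k.val = 0 := by simp [h0]
    rw [if_pos h0, hval0, if_neg (by omega : ¬ (0 : ℕ) = m - 1)]
    rw [if_pos (by omega : (m - 1) % 2 = 1), if_pos (by norm_num : 1 % 2 = 1),
      if_pos (by norm_num : (0:ℕ) % 4 = 0)]
    have ho : Odd ((m - 1 - 1) / 2) := Nat.odd_iff.mpr (by omega)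
    rw [ho.neg_one_pow]
    have e1 : (m - 1 - 1) / 2 = m / 2 - 1 := by omega
    have e2 : ((1:ℕ) - 1) / 2 = 0 := by norm_num
    rw [e1, e2]
    have ec : ((m / 2 - 1 : ℕ) : ℝ) = (m : ℝ) / 2 - 1 := by
      push_cast [Nat.cast_sub (by omega : 1 ≤ m / 2)]
      congr 1
      rw [Nat.cast_div (by omega : 2 ∣ m) (by norm_num)]
      norm_num
    rw [ec]
    simp only [if_pos h0]
    push_cast
    field_simp
    ring
  · have hval0 : k.val ≠ 0 := by simpa [ZMod.val_eq_zero] using h0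
    rw [if_neg h0]
    by_cases hpar : k.val % 2 = 1
    · rw [if_neg (by omega : ¬ (k.val - 1) % 2 = 1)]
      rw [if_neg (by omega : ¬ k.val % 4 = 0), if_neg (by omega : ¬ k.val % 4 = 2)]
      by_cases htop : k.val = m - 1
      · rw [if_pos htop, if_neg (by omega : ¬ (0:ℕ) % 2 = 1)]
        simp [h0]
      · rw [if_neg htop, if_neg (by omega : ¬ (k.val + 1) % 2 = 1)]
        simp [h0]
    · have hne : k.val ≠ m - 1 := by omega
      rw [if_neg hne]
      rw [if_pos (by omega : (k.val - 1) % 2 = 1), if_pos (by omega : (k.val + 1) % 2 = 1)]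
      have e1 : (k.val - 1 - 1) / 2 = k.val / 2 - 1 := by omega
      have e2 : (k.val + 1 - 1) / 2 = k.val / 2 := by omega
      have hs : 1 ≤ k.val / 2 := by omega
      rw [e1, e2]
      have hcast : ((k.val / 2 - 1 : ℕ) : ℝ) = ((k.val / 2 : ℕ) : ℝ) - 1 :=
        by push_cast [Nat.cast_sub hs]; ring
      have hpow : (-1 : ℝ) ^ (k.val / 2) = (-1 : ℝ) ^ (k.val / 2 - 1) * (-1) := by
        conv_lhs => rw [show k.val / 2 = (k.val / 2 - 1) + 1 by omega]
        rw [pow_succ]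
      by_cases hs2 : k.val % 4 = 0
      · have hsodd : Odd (k.val / 2 - 1) := Nat.odd_iff.mpr (by omega)
        rw [if_pos hs2, hpow, hcast, hsodd.neg_one_pow, if_neg h0]
        field_simp
        ring
      · have hs2' : k.val % 4 = 2 := by omega
        have hsev : Even (k.val / 2 - 1) := Nat.even_iff.mpr (by omega)
        rw [if_neg hs2, if_pos hs2', hpow, hcast, hsev.neg_one_pow, if_neg h0]
        field_simp
        ring

lemma cFour_one (hm : 8 ≤ m) : cFour m 1 = ((m:ℝ) - 2) / (2 * m) := by
  haveI : Fact (1 < m) := ⟨by omega⟩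
  unfold cFour
  rw [ZMod.val_one]
  norm_num

lemma qF_even (hm : 8 ≤ m) (h4 : m % 4 = 0) (k : ZMod m) : qF m (-k) = qF m k := by
  by_cases h0 : k = 0
  · simp [h0]
  · have hval0 : k.val ≠ 0 := by simpa [ZMod.val_eq_zero] using h0
    have hv := ZMod.val_lt k
    have hneg : (-k).val = m - k.val := by
      have h1 : ((m - k.val : ℕ) : ZMod m) = -k := by
        push_cast [Nat.cast_sub (le_of_lt hv)]
        rw [ZMod.natCast_val, ZMod.cast_id]
        simp
      rw [← h1, ZMod.val_cast_of_lt (by omega)]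
    unfold qF
    rw [hneg]
    by_cases c0 : k.val % 4 = 0
    · rw [if_pos c0, if_pos (by omega : (m - k.val) % 4 = 0)]
    · by_cases c2 : k.val % 4 = 2
      · rw [if_neg c0, if_pos c2, if_neg (by omega : ¬ (m - k.val) % 4 = 0),
          if_pos (by omega : (m - k.val) % 4 = 2)]
      · rw [if_neg c0, if_neg c2, if_neg (by omega : ¬ (m - k.val) % 4 = 0),
          if_neg (by omega : ¬ (m - k.val) % 4 = 2)]

lemma qF_conv (hm : 8 ≤ m) (h4 : m % 4 = 0) (k : ZMod m) :
    qF m (k - 1) + qF m (k + 1) = 0 := by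
  have hm3 : 3 ≤ m := by omega
  have hv := ZMod.val_lt k
  unfold qF
  rw [val_sub_one hm3 k, val_add_one hm3 k]
  by_cases h0 : k = 0
  · have hval0 : k.val = 0 := by simp [h0]
    rw [if_pos h0, hval0]
    rw [if_neg (by omega : ¬ (0:ℕ) = m - 1)]
    rw [if_neg (by omega : ¬ (m-1) % 4 = 0), if_neg (by omega : ¬ (m-1) % 4 = 2),
      if_neg (by omega : ¬ (0+1) % 4 = 0), if_neg (by omega : ¬ (0+1) % 4 = 2)]
    ring
  · have hval0 : k.val ≠ 0 := by simpa [ZMod.val_eq_zero] using h0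
    rw [if_neg h0]
    by_cases hpar : k.val % 2 = 1
    · by_cases htop : k.val = m - 1
      · rw [if_pos htop]
        rw [if_neg (by omega : ¬ (k.val - 1) % 4 = 0), if_pos (by omega : (k.val - 1) % 4 = 2),
          if_pos (by norm_num : (0:ℕ) % 4 = 0)]
        ring
      · rw [if_neg htop]
        by_cases c1 : k.val % 4 = 1
        · rw [if_pos (by omega : (k.val - 1) % 4 = 0),
            if_neg (by omega : ¬ (k.val + 1) % 4 = 0), if_pos (by omega : (k.val + 1) % 4 = 2)]
          ring
        · rw [if_neg (by omega : ¬ (k.val - 1) % 4 = 0), if_pos (by omega : (k.val - 1) % 4 = 2),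
            if_pos (by omega : (k.val + 1) % 4 = 0)]
          ring
    · have htop : k.val ≠ m - 1 := by omega
      rw [if_neg htop]
      rw [if_neg (by omega : ¬ (k.val - 1) % 4 = 0), if_neg (by omega : ¬ (k.val - 1) % 4 = 2),
        if_neg (by omega : ¬ (k.val + 1) % 4 = 0), if_neg (by omega : ¬ (k.val + 1) % 4 = 2)]
      ring

lemma bigsum (hm : 8 ≤ m) (h4 : m % 4 = 0) (k : ZMod m) :
    ∑ l : ZMod m, qF m (k - l) * cFour m l = 0 := by
  rw [zsum_eq_range]
  have hhalf : m = 2 * (m / 2) := by omega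
  rw [show Finset.range m = Finset.range (2 * (m / 2)) from by rw [← hhalf], sum_range_pair]
  have heven : ∀ t, t ∈ Finset.range (m / 2) →
      cFour m ((2 * t : ℕ) : ZMod m) = 0 := by
    intro t ht
    rw [Finset.mem_range] at ht
    unfold cFour
    rw [ZMod.val_cast_of_lt (by omega : 2 * t < m)]
    rw [if_neg (by omega : ¬ (2 * t) % 2 = 1)]
  have hterm : ∀ t, t ∈ Finset.range (m / 2) →
      qF m (k - ((2 * t : ℕ) : ZMod m)) * cFour m ((2 * t : ℕ) : ZMod m)
        + qF m (k - ((2 * t + 1 : ℕ) : ZMod m)) * cFour m ((2 * t + 1 : ℕ) : ZMod m)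
      = qF m (k - ((2 * t + 1 : ℕ) : ZMod m)) * cFour m ((2 * t + 1 : ℕ) : ZMod m) := by
    intro t ht
    rw [heven t ht]
    ring
  rw [Finset.sum_congr rfl hterm]
  by_cases hpar : k.val % 2 = 1
  · set eps : ℝ := if k.val % 4 = 1 then 1 else -1 with heps
    have hterm2 : ∀ t, t ∈ Finset.range (m / 2) →
        qF m (k - ((2 * t + 1 : ℕ) : ZMod m)) * cFour m ((2 * t + 1 : ℕ) : ZMod m)
        = (eps / (2 * m)) * (((m : ℝ) - 2) - 4 * (t : ℝ)) := by
      intro t ht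
      rw [Finset.mem_range] at ht
      have hlv : ((2 * t + 1 : ℕ) : ZMod m).val = 2 * t + 1 :=
        ZMod.val_cast_of_lt (by omega : 2 * t + 1 < m)
      have hc : cFour m ((2 * t + 1 : ℕ) : ZMod m)
          = (-1 : ℝ) ^ t * ((m : ℝ) - 2 - 4 * (t : ℝ)) / (2 * m) := by
        unfold cFour
        have e : (2 * t + 1 - 1) / 2 = t := by omega
        rw [hlv, if_pos (by omega : (2 * t + 1) % 2 = 1), e]
      have hD := (val_sub_modeq k ((2 * t + 1 : ℕ) : ZMod m)).of_dvd
        (Nat.dvd_of_mod_eq_zero h4)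
      rw [hlv] at hD
      have hD4 : ((k - ((2 * t + 1 : ℕ) : ZMod m)).val + (2 * t + 1)) % 4 = k.val % 4 := hD
      set D := (k - ((2 * t + 1 : ℕ) : ZMod m)).val with hDdef
      unfold qF
      rw [← hDdef]
      rw [hc]
      by_cases c1 : k.val % 4 = 1
      · by_cases ct : t % 2 = 0
        · rw [if_pos (by omega : D % 4 = 0), (Nat.even_iff.mpr ct).neg_one_pow, heps,
            if_pos c1]
          ring
        · rw [if_neg (by omega : ¬ D % 4 = 0), if_pos (by omega : D % 4 = 2),
            (Nat.odd_iff.mpr (by omega)).neg_one_pow, heps, if_pos c1]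
          ring
      · have c3 : k.val % 4 = 3 := by omega
        by_cases ct : t % 2 = 0
        · rw [if_neg (by omega : ¬ D % 4 = 0), if_pos (by omega : D % 4 = 2),
            (Nat.even_iff.mpr ct).neg_one_pow, heps, if_neg c1]
          ring
        · rw [if_pos (by omega : D % 4 = 0),
            (Nat.odd_iff.mpr (by omega)).neg_one_pow, heps, if_neg c1]
          ring
    rw [Finset.sum_congr rfl hterm2, ← Finset.mul_sum]
    have hmcast : (m : ℝ) - 2 = 2 * ((m / 2 : ℕ) : ℝ) - 2 := by
      congr 1
      rw [show (m:ℝ) = ((2 * (m/2) : ℕ) : ℝ) from by rw [← hhalf]]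
      push_cast
      ring
    rw [hmcast]
    rw [sum_linear (m / 2) (2 * ((m / 2 : ℕ) : ℝ) - 2)]
    ring
  · have hterm2 : ∀ t, t ∈ Finset.range (m / 2) →
        qF m (k - ((2 * t + 1 : ℕ) : ZMod m)) * cFour m ((2 * t + 1 : ℕ) : ZMod m) = 0 := by
      intro t ht
      rw [Finset.mem_range] at ht
      have hlv : ((2 * t + 1 : ℕ) : ZMod m).val = 2 * t + 1 :=
        ZMod.val_cast_of_lt (by omega : 2 * t + 1 < m)
      have hD := (val_sub_modeq k ((2 * t + 1 : ℕ) : ZMod m)).of_dvd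
        (Nat.dvd_of_mod_eq_zero (by omega : m % 2 = 0))
      rw [hlv] at hD
      have hD2 : ((k - ((2 * t + 1 : ℕ) : ZMod m)).val + (2 * t + 1)) % 2 = k.val % 2 := hD
      unfold qF
      rw [if_neg (by omega : ¬ (k - ((2 * t + 1 : ℕ) : ZMod m)).val % 4 = 0),
        if_neg (by omega : ¬ (k - ((2 * t + 1 : ℕ) : ZMod m)).val % 4 = 2)]
      ring
    rw [Finset.sum_congr rfl hterm2]
    simp

/-! ### properties of the delta kernel -/

lemma delta_even (k : ZMod m) :
    (if -k = (0 : ZMod m) then (1:ℝ) else 0) = (if k = 0 then 1 else 0) := by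
  simp [neg_eq_zero]

lemma delta_A (hm : 3 ≤ m) (k : ZMod m) :
    (if k - 1 = (0 : ZMod m) then (1:ℝ) else 0) + (if k + 1 = 0 then 1 else 0)
      = if k = 1 ∨ k = -1 then 1 else 0 := by
  have h2 : (2 : ZMod m) ≠ 0 := zz_two_ne_zero hm
  by_cases ha : k = 1
  · have e1 : k - 1 = 0 := by rw [ha]; ring
    have e2 : k + 1 ≠ 0 := by
      rw [ha]
      intro h
      exact h2 (by linear_combination h)
    have hor : (k = 1 ∨ k = -1) := Or.inl ha
    rw [if_pos e1, if_neg e2, if_pos hor]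
    ring
  · by_cases hb : k = -1
    · have e1 : k - 1 ≠ 0 := by
        rw [hb]
        intro h
        exact h2 (by linear_combination -h)
      have e2 : k + 1 = 0 := by rw [hb]; ring
      have hor : (k = 1 ∨ k = -1) := Or.inr hb
      rw [if_neg e1, if_pos e2, if_pos hor]
      ring
    · have e1 : k - 1 ≠ 0 := fun h => ha (by linear_combination h)
      have e2 : k + 1 ≠ 0 := fun h => hb (by linear_combination h)
      simp [e1, e2, ha, hb]

lemma delta_sum (c : ZMod m → ℝ) (k : ZMod m) :
    (∑ l : ZMod m, (if k - l = (0 : ZMod m) then (1:ℝ) else 0) * c l) = c k := by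
  have e : ∀ l : ZMod m, (if k - l = (0 : ZMod m) then (1:ℝ) else 0) * c l
      = if k = l then c l else 0 := by
    intro l
    by_cases h : k = l
    · simp [h]
    · have : k - l ≠ 0 := fun hh => h (by linear_combination hh)
      simp [h, this]
  simp only [e]
  rw [Finset.sum_ite_eq univ k c]
  simp

/-! ### The packaged existence of a good circulant kernel -/

lemma kernel_exists (hm : 3 ≤ m) (hne : m ≠ 4) :
    ∃ c pp : ZMod m → ℝ,
      (∀ k, c (k - 1) + c (k + 1) = pp k) ∧
      (∀ k, pp (-k) = pp k) ∧
      (∀ k, pp (k - 1) + pp (k + 1) = if k = 1 ∨ k = -1 then 1 else 0) ∧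
      (∀ k, (∑ l : ZMod m, pp (k - l) * c l) = c k) ∧
      0 < c (-1) ∧ c 3 < 0 := by
  have key : ∀ c : ZMod m → ℝ, ∀ pp : ZMod m → ℝ,
      (∀ k, c (k - 1) + c (k + 1) = pp k) →
      (0 < pp 0 - c 1) → (pp 2 - c 1 < 0) →
      0 < c (-1) ∧ c 3 < 0 := by
    intro c pp hconv h1 h2
    constructor
    · have := hconv 0
      have e1 : (0:ZMod m) - 1 = -1 := by ring
      have e2 : (0:ZMod m) + 1 = 1 := by ring
      rw [e1, e2] at this
      linarith
    · have := hconv 2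
      have e1 : (2:ZMod m) - 1 = 1 := by ring
      have e2 : (2:ZMod m) + 1 = 3 := by ring
      rw [e1, e2] at this
      linarith
  by_cases hodd : m % 2 = 1
  · refine ⟨cOdd m, fun k => if k = 0 then 1 else 0, cOdd_conv hm hodd, ?_, ?_, ?_, ?_⟩
    · intro k; exact delta_even k
    · intro k
      exact delta_A hm k
    · intro k; exact delta_sum (cOdd m) k
    · apply key _ _ (cOdd_conv hm hodd)
      · rw [cOdd_one hm hodd]
        norm_num
      · rw [cOdd_one hm hodd]
        have h2 : (2 : ZMod m) ≠ 0 := zz_two_ne_zero hm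
        rw [if_neg h2]
        norm_num
  · by_cases h42 : m % 4 = 2
    · refine ⟨cTwo m, fun k => if k = 0 then 1 else 0, cTwo_conv hm h42, ?_, ?_, ?_, ?_⟩
      · intro k; exact delta_even k
      · intro k; exact delta_A hm k
      · intro k; exact delta_sum (cTwo m) k
      · apply key _ _ (cTwo_conv hm h42)
        · rw [cTwo_one hm]
          norm_num
        · rw [cTwo_one hm]
          have h2 : (2 : ZMod m) ≠ 0 := zz_two_ne_zero hm
          rw [if_neg h2]
          norm_num
    · have h40 : m % 4 = 0 := by omega
      have hm8 : 8 ≤ m := by omega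
      have hmR : (0:ℝ) < (m:ℝ) := by positivity
      have hmR8 : (8:ℝ) ≤ (m:ℝ) := by exact_mod_cast hm8
      refine ⟨cFour m, fun k => (if k = 0 then 1 else 0) - (2 / m) * qF m k,
        cFour_conv hm8 h40, ?_, ?_, ?_, ?_⟩
      · intro k
        show (if -k = (0:ZMod m) then (1:ℝ) else 0) - 2 / (m:ℝ) * qF m (-k)
            = (if k = (0:ZMod m) then (1:ℝ) else 0) - 2 / (m:ℝ) * qF m k
        rw [delta_even k, qF_even hm8 h40 k]
      · intro k
        have hq := qF_conv hm8 h40 k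
        have hd := delta_A hm k
        calc ((if k - 1 = (0:ZMod m) then (1:ℝ) else 0) - (2 / m) * qF m (k-1))
            + ((if k + 1 = (0:ZMod m) then (1:ℝ) else 0) - (2 / m) * qF m (k+1))
            = ((if k - 1 = (0:ZMod m) then (1:ℝ) else 0) + (if k + 1 = 0 then 1 else 0))
              - (2/m) * (qF m (k-1) + qF m (k+1)) := by ring
          _ = if k = 1 ∨ k = -1 then 1 else 0 := by rw [hq, hd]; ring
      · intro k
        have e : ∀ l : ZMod m,
            ((if k - l = (0:ZMod m) then (1:ℝ) else 0) - (2 / m) * qF m (k - l)) * cFour m l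
            = (if k - l = (0:ZMod m) then (1:ℝ) else 0) * cFour m l
              - (2/m) * (qF m (k - l) * cFour m l) := by
          intro l; ring
        simp only [e]
        rw [Finset.sum_sub_distrib, delta_sum (cFour m) k, ← Finset.mul_sum,
          bigsum hm8 h40 k]
        ring
      · apply key _ _ (cFour_conv hm8 h40)
        · show 0 < ((if (0:ZMod m) = 0 then (1:ℝ) else 0) - 2 / (m:ℝ) * qF m 0) - cFour m 1
          have hq0 : qF m 0 = 1 := by unfold qF; simp
          rw [if_pos rfl, hq0, cFour_one hm8]
          have e : (1:ℝ) - 2 / (m:ℝ) * 1 - ((m:ℝ) - 2) / (2 * (m:ℝ))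
              = ((m:ℝ) - 2) / (2 * (m:ℝ)) := by
            field_simp
            ring
          rw [e]
          apply div_pos (by linarith) (by linarith)
        · have hv2 : (2 : ZMod m).val = 2 := by
            have e : ((2 : ℕ) : ZMod m) = 2 := by push_cast; ring
            rw [← e, ZMod.val_cast_of_lt (by omega)]
          have hq2 : qF m 2 = -1 := by
            unfold qF
            rw [hv2]
            norm_num
          have h2 : (2 : ZMod m) ≠ 0 := zz_two_ne_zero hm
          show ((if (2:ZMod m) = 0 then (1:ℝ) else 0) - 2 / (m:ℝ) * qF m 2) - cFour m 1 < 0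
          rw [if_neg h2, hq2, cFour_one hm8]
          have e : (0:ℝ) - 2 / (m:ℝ) * (-1) - ((m:ℝ) - 2) / (2 * (m:ℝ))
              = ((6:ℝ) - (m:ℝ)) / (2 * (m:ℝ)) := by
            field_simp
            ring
          rw [e]
          apply div_neg_of_neg_of_pos (by linarith) (by linarith)

end CycleMP

/-- The cycle `C_m`, `m ≥ 3`, `m ≠ 4`, is neither positively nor negatively pseudo-invertible. -/
theorem stmt_5 (m : ℕ) [NeZero m] (hm : 3 ≤ m) (hne : m ≠ 4)
    (A A' : Matrix (ZMod m) (ZMod m) ℝ)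
    (hA : ∀ i j, A i j = if i - j = 1 ∨ j - i = 1 then 1 else 0)
    (hMP : IsMoorePenrose A A') :
    ¬ ∃ d : ZMod m → ℝ, IsSign d ∧
        ((∀ i j, 0 ≤ (Matrix.diagonal d * A' * Matrix.diagonal d) i j) ∨
         (∀ i j, (Matrix.diagonal d * A' * Matrix.diagonal d) i j ≤ 0)) := by
  rintro ⟨d, hd, hsign⟩
  obtain ⟨c, pp, hconv, hppeven, hppA, hPB, hx, hy⟩ := CycleMP.kernel_exists (m := m) hm hne
  have hB := CycleMP.circulant_mp hm A hA c pp hconv hppeven hppA hPB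
  have hXB : A' = Matrix.of (fun i j => c (i - j)) := CycleMP.mp_unique hMP hB
  have hentry : ∀ i j : ZMod m,
      (Matrix.diagonal d * A' * Matrix.diagonal d) i j = d i * c (i - j) * d j := by
    intro i j
    rw [Matrix.mul_diagonal, Matrix.diagonal_mul, hXB]
    rfl
  have hdsq : ∀ i : ZMod m, d i * d i = 1 := by
    intro i
    rcases hd i with h | h <;> rw [h] <;> norm_num
  -- the four entries of the 4-walk 0 → 1 → 2 → 3 → 0
  have e01 : (0 : ZMod m) - 1 = -1 := by ring
  have e12 : (1 : ZMod m) - 2 = -1 := by ring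
  have e23 : (2 : ZMod m) - 3 = -1 := by ring
  have e30 : (3 : ZMod m) - 0 = 3 := by ring
  set x := c (-1) with hxdef
  set y := c 3 with hydef
  have hprod : (d 0 * x * d 1) * ((d 1 * x * d 2) * ((d 2 * x * d 3) * (d 3 * y * d 0)))
      = x * x * x * y := by
    have : (d 0 * x * d 1) * ((d 1 * x * d 2) * ((d 2 * x * d 3) * (d 3 * y * d 0)))
        = (d 0 * d 0) * ((d 1 * d 1) * ((d 2 * d 2) * ((d 3 * d 3) * (x * x * x * y)))) := by
      ring
    rw [this, hdsq 0, hdsq 1, hdsq 2, hdsq 3]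
    ring
  have hneg : x * x * x * y < 0 := by
    have hx3 : 0 < x * x * x := by positivity
    nlinarith
  rcases hsign with hpos | hneg'
  · have h1 := hpos 0 1
    have h2 := hpos 1 2
    have h3 := hpos 2 3
    have h4 := hpos 3 0
    rw [hentry, e01] at h1
    rw [hentry, e12] at h2
    rw [hentry, e23] at h3
    rw [hentry, e30] at h4
    have : 0 ≤ (d 0 * x * d 1) * ((d 1 * x * d 2) * ((d 2 * x * d 3) * (d 3 * y * d 0))) := by
      apply mul_nonneg h1
      apply mul_nonneg h2
      exact mul_nonneg h3 h4
    rw [hprod] at this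
    linarith
  · have h1 := hneg' 0 1
    have h2 := hneg' 1 2
    have h3 := hneg' 2 3
    have h4 := hneg' 3 0
    rw [hentry, e01] at h1
    rw [hentry, e12] at h2
    rw [hentry, e23] at h3
    rw [hentry, e30] at h4
    have : 0 ≤ (d 0 * x * d 1) * ((d 1 * x * d 2) * ((d 2 * x * d 3) * (d 3 * y * d 0))) := by
      have p1 : 0 ≤ (d 0 * x * d 1) * (d 1 * x * d 2) := by nlinarith
      have p2 : 0 ≤ (d 2 * x * d 3) * (d 3 * y * d 0) := by nlinarith
      calc (0:ℝ) ≤ ((d 0 * x * d 1) * (d 1 * x * d 2)) * ((d 2 * x * d 3) * (d 3 * y * d 0)) :=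
            mul_nonneg p1 p2
        _ = (d 0 * x * d 1) * ((d 1 * x * d 2) * ((d 2 * x * d 3) * (d 3 * y * d 0))) := by ring
    rw [hprod] at this
    linarith
end

section
/- For the path graph P_m of odd order m ≥ 5, the Moore-Penrose inverse A† of the adjacency matrix is neither positively nor negatively signable. -/
open Matrix

namespace Stmt9Aux

open Finset

noncomputable def Vpat : ℕ → ℝ := fun n => if Even n then (-1:ℝ)^(n/2) else 0

lemma Vpat_step (n : ℕ) : Vpat (n+2) = -Vpat n := by
  unfold Vpat
  have h2 : (n+2)/2 = n/2 + 1 := by omega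
  rcases Nat.even_or_odd n with h | h
  · rw [if_pos h, if_pos (by rcases h with ⟨k, hk⟩; exact ⟨k+1, by omega⟩), h2, pow_succ]
    ring
  · have hn : ¬ Even n := by
      intro hc; have := Nat.even_iff.mp hc; have := Nat.odd_iff.mp h; omega
    have hn2 : ¬ Even (n+2) := by
      intro hc; have := Nat.even_iff.mp hc; have := Nat.odd_iff.mp h; omega
    rw [if_neg hn2, if_neg hn]
    simp

lemma Vpat_odd {n : ℕ} (h : ¬ Even n) : Vpat n = 0 := by
  simp [Vpat, h]

lemma rowSum {m : ℕ} (A : Matrix (Fin m) (Fin m) ℝ)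
    (hA : ∀ i j : Fin m, A i j = if (i : ℕ) + 1 = j ∨ (j : ℕ) + 1 = i then 1 else 0)
    (x : Fin m → ℝ) (i : Fin m) :
    ∑ j, A i j * x j =
      (if h : (i:ℕ)+1 < m then x ⟨(i:ℕ)+1, h⟩ else 0)
      + (if h : 0 < (i:ℕ) then x ⟨(i:ℕ)-1, Nat.lt_of_le_of_lt (Nat.sub_le _ _) i.isLt⟩ else 0) := by
  classical
  have key : ∀ j : Fin m, A i j * x j =
      (if (i:ℕ)+1 = (j:ℕ) then x j else 0) + (if (j:ℕ)+1 = (i:ℕ) then x j else 0) := by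
    intro j
    rw [hA]
    by_cases h1 : (i:ℕ)+1 = (j:ℕ) <;> by_cases h2 : (j:ℕ)+1 = (i:ℕ) <;>
      simp [h1, h2] <;> omega
  rw [Finset.sum_congr rfl (fun j _ => key j), Finset.sum_add_distrib]
  congr 1
  · by_cases h : (i:ℕ)+1 < m
    · rw [dif_pos h]
      have e : ∀ j : Fin m, ((i:ℕ)+1 = (j:ℕ)) ↔ (j = ⟨(i:ℕ)+1, h⟩) := by
        intro j; rw [Fin.ext_iff]; constructor <;> intro hh <;> simp_all
      rw [Finset.sum_congr rfl (fun j _ => by rw [if_congr (e j) rfl rfl]),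
        Finset.sum_ite_eq']
      simp
    · rw [dif_neg h]
      apply Finset.sum_eq_zero
      intro j _
      rw [if_neg]
      have := j.isLt
      omega
  · by_cases h : 0 < (i:ℕ)
    · rw [dif_pos h]
      have e : ∀ j : Fin m, ((j:ℕ)+1 = (i:ℕ)) ↔ (j = ⟨(i:ℕ)-1, Nat.lt_of_le_of_lt (Nat.sub_le _ _) i.isLt⟩) := by
        intro j; rw [Fin.ext_iff]; constructor <;> intro hh <;> simp_all <;> omega
      rw [Finset.sum_congr rfl (fun j _ => by rw [if_congr (e j) rfl rfl]),
        Finset.sum_ite_eq']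
      simp
    · rw [dif_neg h]
      apply Finset.sum_eq_zero
      intro j _
      rw [if_neg]
      omega


lemma rowSum' {m : ℕ} (A : Matrix (Fin m) (Fin m) ℝ)
    (hA : ∀ i j : Fin m, A i j = if (i : ℕ) + 1 = j ∨ (j : ℕ) + 1 = i then 1 else 0)
    (B : Matrix (Fin m) (Fin m) ℝ) (i k : Fin m) :
    (A * B) i k =
      (if h : (i:ℕ)+1 < m then B ⟨(i:ℕ)+1, h⟩ k else 0)
      + (if h : 0 < (i:ℕ) then B ⟨(i:ℕ)-1, Nat.lt_of_le_of_lt (Nat.sub_le _ _) i.isLt⟩ k else 0) := by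
  rw [Matrix.mul_apply]
  exact rowSum A hA (fun j => B j k) i

lemma Vpat_zero : Vpat 0 = 1 := by simp [Vpat]
lemma Vpat_two : Vpat 2 = -1 := by norm_num [Vpat]
lemma Vpat_four : Vpat 4 = 1 := by
  rw [Vpat, if_pos ⟨2, rfl⟩]
  norm_num

lemma kern {m : ℕ} (hm0 : 0 < m) (A : Matrix (Fin m) (Fin m) ℝ)
    (hA : ∀ i j : Fin m, A i j = if (i : ℕ) + 1 = j ∨ (j : ℕ) + 1 = i then 1 else 0)
    (y : Fin m → ℝ) (hy : ∀ i, ∑ j, A i j * y j = 0) (i : Fin m) :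
    y i = y ⟨0, hm0⟩ * Vpat i := by
  classical
  set Y : ℕ → ℝ := fun n => if h : n < m then y ⟨n, h⟩ else 0 with hY
  have hYd : ∀ n, Y n = if h : n < m then y ⟨n, h⟩ else 0 := fun n => rfl
  have hY1 : Y 1 = 0 := by
    have hy0 := hy ⟨0, hm0⟩
    rw [rowSum A hA] at hy0
    simp only [dif_neg (lt_irrefl 0), add_zero] at hy0
    rw [hYd]
    by_cases h : 1 < m
    · rw [dif_pos h]
      rw [dif_pos (show (0:ℕ)+1 < m from h)] at hy0
      exact hy0
    · rw [dif_neg h]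
  have hrec : ∀ n, n + 1 < m → Y (n+2) = - Y n := by
    intro n h
    have hy2 := hy ⟨n+1, h⟩
    rw [rowSum A hA] at hy2
    rw [dif_pos (Nat.succ_pos n)] at hy2
    simp only [Nat.add_sub_cancel] at hy2
    have e1 : (if h' : n+1+1 < m then y ⟨n+1+1, h'⟩ else 0) = Y (n+2) := by
      rw [hYd]
    have e2 : y ⟨n, Nat.lt_of_le_of_lt (Nat.le_succ n) h⟩ = Y n := by
      rw [hYd, dif_pos (show n < m from Nat.lt_of_le_of_lt (Nat.le_succ n) h)]
    rw [e1, e2] at hy2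
    linarith
  have key : ∀ n, (n < m → Y n = Y 0 * Vpat n) ∧ (n+1 < m → Y (n+1) = Y 0 * Vpat (n+1)) := by
    intro n
    induction n with
    | zero =>
      constructor
      · intro _; simp [Vpat]
      · intro _; rw [hY1]; simp [Vpat]
    | succ k ih =>
      refine ⟨ih.2, ?_⟩
      intro h
      have h1 : k + 1 < m := by omega
      rw [hrec k h1, ih.1 (by omega), Vpat_step]
      ring
  have h0 : Y 0 = y ⟨0, hm0⟩ := by rw [hYd, dif_pos hm0]
  have hi : Y (i:ℕ) = y i := by rw [hYd, dif_pos i.isLt]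
  rw [← hi, ← h0]
  exact (key (i:ℕ)).1 i.isLt

lemma Av {m : ℕ} (hm : Odd m) (A : Matrix (Fin m) (Fin m) ℝ)
    (hA : ∀ i j : Fin m, A i j = if (i : ℕ) + 1 = j ∨ (j : ℕ) + 1 = i then 1 else 0)
    (i : Fin m) :
    ∑ j, A i j * Vpat (j:ℕ) = 0 := by
  rw [rowSum A hA]
  have e1 : (if h : (i:ℕ)+1 < m then Vpat ((⟨(i:ℕ)+1, h⟩ : Fin m) : ℕ) else 0) = Vpat ((i:ℕ)+1) := by
    by_cases h : (i:ℕ)+1 < m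
    · rw [dif_pos h]
    · rw [dif_neg h]
      have him : (i:ℕ)+1 = m := by have := i.isLt; omega
      rw [him, Vpat_odd (by intro hc; have := Nat.even_iff.mp hc; have := Nat.odd_iff.mp hm; omega)]
  rw [e1]
  rcases Nat.eq_zero_or_pos (i:ℕ) with h0 | h0
  · rw [dif_neg (by omega), h0]
    simp [Vpat]
  · rw [dif_pos h0]
    obtain ⟨k, hk⟩ : ∃ k, (i:ℕ) = k + 1 := ⟨(i:ℕ)-1, by omega⟩
    have : Vpat ((i:ℕ)+1) = - Vpat ((i:ℕ)-1) := by
      rw [hk]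
      simpa using Vpat_step k
    rw [this]
    ring

end Stmt9Aux

open Stmt9Aux

set_option maxHeartbeats 2000000

/-- For the path `P_m` of odd order `m ≥ 5`, the Moore-Penrose inverse of the adjacency matrix
is neither positively nor negatively signable. -/
theorem stmt_9 (m : ℕ) (hm : Odd m) (h5 : 5 ≤ m)
    (A A' : Matrix (Fin m) (Fin m) ℝ)
    (hA : ∀ i j : Fin m, A i j = if (i : ℕ) + 1 = j ∨ (j : ℕ) + 1 = i then 1 else 0)
    (hMP : IsMoorePenrose A A') :
    (¬ ∃ d : Fin m → ℝ, IsSign d ∧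
        ∀ i j, 0 ≤ (Matrix.diagonal d * A' * Matrix.diagonal d) i j) ∧
    (¬ ∃ d : Fin m → ℝ, IsSign d ∧
        ∀ i j, (Matrix.diagonal d * A' * Matrix.diagonal d) i j ≤ 0) := by
  classical
  obtain ⟨h1, h2, h3, h4⟩ := hMP
  have hm0 : 0 < m := by omega
  obtain ⟨i0, hi0⟩ : ∃ x : Fin m, x = ⟨0, hm0⟩ := ⟨_, rfl⟩
  obtain ⟨i1, hi1⟩ : ∃ x : Fin m, x = ⟨1, by omega⟩ := ⟨_, rfl⟩
  obtain ⟨i2, hi2⟩ : ∃ x : Fin m, x = ⟨2, by omega⟩ := ⟨_, rfl⟩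
  obtain ⟨i3, hi3⟩ : ∃ x : Fin m, x = ⟨3, by omega⟩ := ⟨_, rfl⟩
  obtain ⟨i4, hi4⟩ : ∃ x : Fin m, x = ⟨4, by omega⟩ := ⟨_, rfl⟩
  have hc0 : (i0:ℕ) = 0 := by rw [hi0]
  have hc1 : (i1:ℕ) = 1 := by rw [hi1]
  have hc2 : (i2:ℕ) = 2 := by rw [hi2]
  have hc3 : (i3:ℕ) = 3 := by rw [hi3]
  have hc4 : (i4:ℕ) = 4 := by rw [hi4]
  have hAsym : ∀ i j : Fin m, A i j = A j i := by
    intro i j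
    rw [hA, hA]
    simp [or_comm]
  have hAT : Aᵀ = A := by
    ext i j
    rw [Matrix.transpose_apply]
    exact hAsym j i
  have hAPA : A * (A * A') = A := by
    have := congrArg Matrix.transpose h3
    rw [Matrix.transpose_mul, h1, hAT] at this
    exact this
  have hvA : ∀ j : Fin m, ∑ i : Fin m, Vpat (i:ℕ) * A i j = 0 := by
    intro j
    have e : ∑ i : Fin m, Vpat (i:ℕ) * A i j = ∑ i, A j i * Vpat (i:ℕ) := by
      apply Finset.sum_congr rfl
      intro i _
      rw [hAsym i j]
      ring
    rw [e]
    exact Av hm A hA j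
  have hvAA : ∀ k : Fin m, ∑ i : Fin m, Vpat (i:ℕ) * (A * A') i k = 0 := by
    intro k
    have swap : ∑ i : Fin m, Vpat (i:ℕ) * (A * A') i k
        = ∑ j, (∑ i : Fin m, Vpat (i:ℕ) * A i j) * A' j k := by
      simp only [Matrix.mul_apply, Finset.mul_sum, Finset.sum_mul]
      rw [Finset.sum_comm]
      apply Finset.sum_congr rfl
      intro j _
      apply Finset.sum_congr rfl
      intro i _
      ring
    rw [swap]
    simp only [hvA, zero_mul, Finset.sum_const_zero]
  -- the quadratic sum
  set S : ℝ := ∑ i : Fin m, Vpat (i:ℕ) * Vpat (i:ℕ) with hSdef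
  have hmain : ∀ k : Fin m, ∃ t : ℝ, t * S = -Vpat (k:ℕ) ∧
      ∀ i, (A * A') i k = (if i = k then (1:ℝ) else 0) + t * Vpat (i:ℕ) := by
    intro k
    set y : Fin m → ℝ := fun i => (A * A') i k - (if i = k then 1 else 0) with hydef
    have hyd : ∀ i, y i = (A * A') i k - (if i = k then 1 else 0) := fun i => rfl
    have hyk : ∀ i, ∑ j, A i j * y j = 0 := by
      intro i
      have expand : ∑ j, A i j * y j
          = (∑ j, A i j * (A * A') j k) - (∑ j, A i j * (if j = k then 1 else 0)) := by
        rw [← Finset.sum_sub_distrib]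
        apply Finset.sum_congr rfl
        intro j _
        rw [hyd]
        ring
      rw [expand, ← Matrix.mul_apply, hAPA]
      have e2 : ∑ j, A i j * (if j = k then (1:ℝ) else 0) = A i k := by simp
      rw [e2]
      ring
    have hform := kern hm0 A hA y hyk
    refine ⟨y ⟨0, hm0⟩, ?_, ?_⟩
    · have hs1 : ∑ i : Fin m, Vpat (i:ℕ) * y i = - Vpat (k:ℕ) := by
        have expand : ∑ i : Fin m, Vpat (i:ℕ) * y i
            = (∑ i : Fin m, Vpat (i:ℕ) * (A * A') i k)
              - (∑ i : Fin m, Vpat (i:ℕ) * (if i = k then 1 else 0)) := by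
          rw [← Finset.sum_sub_distrib]
          apply Finset.sum_congr rfl
          intro i _
          rw [hyd]
          ring
        rw [expand, hvAA k]
        have e3 : ∑ i : Fin m, Vpat (i:ℕ) * (if i = k then (1:ℝ) else 0) = Vpat (k:ℕ) := by simp
        rw [e3]
        ring
      have hs2 : ∑ i : Fin m, Vpat (i:ℕ) * y i = y ⟨0, hm0⟩ * S := by
        rw [hSdef, Finset.mul_sum]
        apply Finset.sum_congr rfl
        intro i _
        rw [hform i]
        ring
      rw [← hs2, hs1]
    · intro i
      have e4 := hform i
      have e5 := hyd i
      rw [e5] at e4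
      linarith [e4]
  have hS3 : (3:ℝ) ≤ S := by
    have hne02 : i0 ≠ i2 := Fin.ne_of_val_ne (by rw [hc0, hc2]; norm_num)
    have hne04 : i0 ≠ i4 := Fin.ne_of_val_ne (by rw [hc0, hc4]; norm_num)
    have hne24 : i2 ≠ i4 := Fin.ne_of_val_ne (by rw [hc2, hc4]; norm_num)
    have hsum : ∑ i ∈ ({i0, i2, i4} : Finset (Fin m)), Vpat (i:ℕ) * Vpat (i:ℕ) = 3 := by
      rw [Finset.sum_insert (by simp [hne02, hne04]),
        Finset.sum_insert (by simp [hne24]), Finset.sum_singleton,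
        hc0, hc2, hc4, Vpat_zero, Vpat_two, Vpat_four]
      norm_num
    calc (3:ℝ) = ∑ i ∈ ({i0, i2, i4} : Finset (Fin m)), Vpat (i:ℕ) * Vpat (i:ℕ) := hsum.symm
    _ ≤ S := by
      rw [hSdef]
      exact Finset.sum_le_sum_of_subset_of_nonneg (Finset.subset_univ _)
        (fun i _ _ => mul_self_nonneg _)
  have hSpos : (0:ℝ) < S := by linarith
  -- row equations
  have hb1 : (i0:ℕ) + 1 < m := by omega
  have hb0 : ¬ 0 < (i0:ℕ) := by omega
  have hb3 : (i2:ℕ) + 1 < m := by omega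
  have hb2 : 0 < (i2:ℕ) := by omega
  have hrow0 : ∀ k, (A * A') i0 k = A' i1 k := by
    intro k
    rw [rowSum' A hA A' i0 k, dif_pos hb1, dif_neg hb0, add_zero]
    congr 1
    apply Fin.ext
    simp [hc0, hc1]
  have hrow2 : ∀ k, (A * A') i2 k = A' i3 k + A' i1 k := by
    intro k
    rw [rowSum' A hA A' i2 k, dif_pos hb3, dif_pos hb2]
    congr 2
    · apply Fin.ext
      simp [hc2, hc3]
    · apply Fin.ext
      simp only [Fin.val_mk]
      omega
  -- extract entries
  obtain ⟨t0, ht0, hf0⟩ := hmain i0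
  obtain ⟨t2, ht2, hf2⟩ := hmain i2
  rw [hc0, Vpat_zero] at ht0
  rw [hc2, Vpat_two] at ht2
  have ht2' : t2 * S = 1 := by linarith [ht2]
  have hne02 : i0 ≠ i2 := Fin.ne_of_val_ne (by rw [hc0, hc2]; norm_num)
  have hne20 : i2 ≠ i0 := fun h => hne02 h.symm
  have ea : A' i1 i0 = 1 + t0 := by
    rw [← hrow0 i0, hf0 i0, if_pos rfl, hc0, Vpat_zero]
    ring
  have eb : A' i1 i2 = t2 := by
    rw [← hrow0 i2, hf2 i0, if_neg hne02, hc0, Vpat_zero]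
    ring
  have ed : A' i3 i0 = -1 - 2*t0 := by
    have e := hrow2 i0
    rw [hf0 i2, if_neg hne20, hc2, Vpat_two, ea] at e
    linarith [e]
  have ec : A' i3 i2 = 1 - 2*t2 := by
    have e := hrow2 i2
    rw [hf2 i2, if_pos rfl, hc2, Vpat_two, eb] at e
    linarith [e]
  have fa : 0 < A' i1 i0 := by rw [ea]; nlinarith [ht0, hS3, hSpos]
  have fb : 0 < A' i1 i2 := by rw [eb]; nlinarith [ht2', hSpos]
  have fc : 0 < A' i3 i2 := by rw [ec]; nlinarith [ht2', hS3, hSpos]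
  have fd : A' i3 i0 < 0 := by rw [ed]; nlinarith [ht0, hS3, hSpos]
  have ediag : ∀ (d : Fin m → ℝ) (i j : Fin m),
      (Matrix.diagonal d * A' * Matrix.diagonal d) i j = d i * A' i j * d j := by
    intro d i j
    rw [Matrix.mul_diagonal, Matrix.diagonal_mul]
  constructor
  · rintro ⟨d, hd, hcon⟩
    have q1 := hcon i1 i0
    have q2 := hcon i1 i2
    have q3 := hcon i3 i2
    have q4 := hcon i3 i0
    rw [ediag] at q1 q2 q3 q4
    rcases hd i0 with r0|r0 <;> rcases hd i1 with r1|r1 <;> rcases hd i2 with r2|r2 <;>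
      rcases hd i3 with r3|r3 <;>
      simp only [r0, r1, r2, r3] at q1 q2 q3 q4 <;>
      linarith [fa, fb, fc, fd]
  · rintro ⟨d, hd, hcon⟩
    have q1 := hcon i1 i0
    have q2 := hcon i1 i2
    have q3 := hcon i3 i2
    have q4 := hcon i3 i0
    rw [ediag] at q1 q2 q3 q4
    rcases hd i0 with r0|r0 <;> rcases hd i1 with r1|r1 <;> rcases hd i2 with r2|r2 <;>
      rcases hd i3 with r3|r3 <;>
      simp only [r0, r1, r2, r3] at q1 q2 q3 q4 <;>
      linarith [fa, fb, fc, fd]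
end

section
/- The complete bipartite graph K_{m₁,m₂} is both positively and negatively pseudo-invertible, and the Moore-Penrose inverse of its adjacency matrix A satisfies A† = (1/(m₁m₂)) A. -/
open Matrix

/-- The complete bipartite graph `K_{m₁,m₂}` is positively and negatively pseudo-invertible,
with Moore-Penrose inverse `A† = (1/(m₁m₂)) A` of its adjacency matrix `A = [[0,E],[Eᵀ,0]]`. -/
theorem stmt_13 (m₁ m₂ : ℕ) (h₁ : 0 < m₁) (h₂ : 0 < m₂)
    (E : Matrix (Fin m₁) (Fin m₂) ℝ) (hE : ∀ i j, E i j = 1)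
    (A : Matrix (Fin m₁ ⊕ Fin m₂) (Fin m₁ ⊕ Fin m₂) ℝ)
    (hA : A = Matrix.fromBlocks 0 E Eᵀ 0) :
    IsMoorePenrose A ((1 / ((m₁ : ℝ) * (m₂ : ℝ))) • A) ∧
    (∃ d : Fin m₁ ⊕ Fin m₂ → ℝ, IsSign d ∧
      ∀ i j, 0 ≤ (Matrix.diagonal d * ((1 / ((m₁:ℝ)*(m₂:ℝ))) • A) * Matrix.diagonal d) i j) ∧
    (∃ d : Fin m₁ ⊕ Fin m₂ → ℝ, IsSign d ∧
      ∀ i j, (Matrix.diagonal d * ((1 / ((m₁:ℝ)*(m₂:ℝ))) • A) * Matrix.diagonal d) i j ≤ 0) := by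
  have hm : ((m₁ : ℝ) * (m₂ : ℝ)) ≠ 0 := by positivity
  have hAsym : Aᵀ = A := by
    subst hA
    simp [fromBlocks_transpose]
  have hEEE : E * Eᵀ * E = ((m₁ : ℝ) * (m₂ : ℝ)) • E := by
    ext i j
    simp [mul_apply, hE, mul_comm]
  have hETE : Eᵀ * E * Eᵀ = ((m₁ : ℝ) * (m₂ : ℝ)) • Eᵀ := by
    ext i j
    simp [mul_apply, hE, mul_comm]
  have hA3 : A * A * A = ((m₁ : ℝ) * (m₂ : ℝ)) • A := by
    subst hA
    simp [fromBlocks_multiply, fromBlocks_smul, hEEE, hETE]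
  have hAnn : ∀ i j, 0 ≤ A i j := by
    intro i j
    subst hA
    cases i <;> cases j <;> simp [fromBlocks, hE]
  have key : A * ((1 / ((m₁ : ℝ) * (m₂ : ℝ))) • A) * A = A := by
    rw [Matrix.mul_smul, Matrix.smul_mul, hA3, smul_smul, one_div, inv_mul_cancel₀ hm, one_smul]
  refine ⟨⟨?_, ?_, key, ?_⟩, ?_, ?_⟩
  · rw [Matrix.mul_smul, transpose_smul, transpose_mul, hAsym]
  · rw [Matrix.smul_mul, transpose_smul, transpose_mul, hAsym]
  · rw [Matrix.smul_mul, Matrix.smul_mul, Matrix.mul_smul, hA3, smul_smul, smul_smul]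
    congr 1
    field_simp
  · refine ⟨fun _ => 1, fun i => Or.inl rfl, fun i j => ?_⟩
    simp only [diagonal_one, one_mul, mul_one, Matrix.smul_apply, smul_eq_mul]
    have := hAnn i j
    positivity
  · refine ⟨Sum.elim (fun _ => 1) (fun _ => -1), fun i => by cases i <;> simp, fun i j => ?_⟩
    have hAij : ∀ i j, (Matrix.diagonal (Sum.elim (fun _ : Fin m₁ => (1:ℝ)) (fun _ : Fin m₂ => -1)) * ((1 / ((m₁:ℝ)*(m₂:ℝ))) • A) * Matrix.diagonal (Sum.elim (fun _ : Fin m₁ => (1:ℝ)) (fun _ : Fin m₂ => -1))) i j = Sum.elim (fun _ : Fin m₁ => (1:ℝ)) (fun _ : Fin m₂ => -1) i * ((1 / ((m₁:ℝ)*(m₂:ℝ))) * A i j) * Sum.elim (fun _ : Fin m₁ => (1:ℝ)) (fun _ : Fin m₂ => -1) j := by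
      intro i j
      simp only [Matrix.mul_diagonal, Matrix.diagonal_mul, Matrix.smul_apply, smul_eq_mul]
    rw [hAij]
    subst hA
    have hpos : (0:ℝ) ≤ 1 / ((m₁:ℝ)*(m₂:ℝ)) := by positivity
    cases i <;> cases j <;>
      simp [fromBlocks, hE] <;> positivity
end

section
/- Let K = 𝟏𝟏ᵀ − e₁e₁ᵀ be the m×m matrix (all ones except a 0 in the (1,1) entry), with m ≥ 2. Then the Moore-Penrose inverse of K is K† = (1/(m−1))(e₁𝟏ᵀ + 𝟏e₁ᵀ − (m+1)e₁e₁ᵀ). -/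
open Matrix

/-- For `K = 𝟏𝟏ᵀ − e₁e₁ᵀ` (all ones except a zero in the `(1,1)` entry), `m ≥ 2`, the
Moore-Penrose inverse is `K† = (1/(m−1))(e₁𝟏ᵀ + 𝟏e₁ᵀ − (m+1)e₁e₁ᵀ)`. -/
theorem stmt_14 (m : ℕ) (hm : 2 ≤ m)
    (K : Matrix (Fin m) (Fin m) ℝ)
    (hK : ∀ i j, K i j = if (i : ℕ) = 0 ∧ (j : ℕ) = 0 then 0 else 1) :
    IsMoorePenrose K (Matrix.of fun i j =>
      (1 / ((m : ℝ) - 1)) * ((if (i : ℕ) = 0 then (1:ℝ) else 0) + (if (j : ℕ) = 0 then (1:ℝ) else 0)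
        - ((m : ℝ) + 1) * (if (i : ℕ) = 0 ∧ (j : ℕ) = 0 then (1:ℝ) else 0))) := by
  haveI : NeZero m := ⟨by omega⟩
  set c : ℝ := 1 / ((m : ℝ) - 1) with hc
  set a : Fin m → ℝ := fun i => if (i : ℕ) = 0 then 1 else 0 with ha
  set K' : Matrix (Fin m) (Fin m) ℝ := Matrix.of fun i j =>
      c * (a i + a j - ((m : ℝ) + 1) * (a i * a j)) with hK'def
  have hm1 : (m : ℝ) - 1 ≠ 0 := by
    have : (2 : ℝ) ≤ (m : ℝ) := by exact_mod_cast hm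
    linarith
  have hval : ∀ i : Fin m, a i = 0 ∨ a i = 1 := by
    intro i; by_cases h : (i : ℕ) = 0 <;> simp only [ha, h, if_true, if_false] <;> norm_num
  have hKa : ∀ i j, K i j = 1 - a i * a j := by
    intro i j; rw [hK]
    by_cases h1 : (i : ℕ) = 0 <;> by_cases h2 : (j : ℕ) = 0 <;>
      simp only [ha, h1, h2, and_true, and_false, true_and, false_and, and_self, if_true, if_false] <;> norm_num
  have hCand : (Matrix.of fun (i j : Fin m) =>
      (1 / ((m : ℝ) - 1)) * ((if (i : ℕ) = 0 then (1:ℝ) else 0) + (if (j : ℕ) = 0 then (1:ℝ) else 0)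
        - ((m : ℝ) + 1) * (if (i : ℕ) = 0 ∧ (j : ℕ) = 0 then (1:ℝ) else 0))) = K' := by
    ext i j
    simp only [hK'def, Matrix.of_apply, hc, ha]
    by_cases h1 : (i : ℕ) = 0 <;> by_cases h2 : (j : ℕ) = 0 <;> simp [h1, h2]
  rw [hCand]
  -- key sum lemma
  have hsum1 : ∑ k : Fin m, a k = 1 := by
    have : ∀ k : Fin m, a k = if k = (0 : Fin m) then (1:ℝ) else 0 := by
      intro k
      have : ((k : ℕ) = 0) ↔ k = (0 : Fin m) :=
        ⟨fun h => Fin.ext (by simpa using h), fun h => by simp [h]⟩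
      simp [ha, this]
    simp [this]
  have key : ∀ p : ℝ → ℝ, ∑ k : Fin m, p (a k) = ((m : ℝ) - 1) * p 0 + p 1 := by
    intro p
    have h1 : ∀ k : Fin m, p (a k) = p 0 + (p 1 - p 0) * a k := by
      intro k; rcases hval k with h | h <;> rw [h] <;> ring
    rw [Finset.sum_congr rfl fun k _ => h1 k, Finset.sum_add_distrib, ← Finset.mul_sum, hsum1,
      Finset.sum_const, Finset.card_univ, Fintype.card_fin, nsmul_eq_mul]
    ring
  have hKK' : ∀ i j, (K * K') i j = c * (1 - a i - a j + (m : ℝ) * (a i * a j)) := by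
    intro i j
    have e : ∀ k, K i k * K' k j
        = (1 - a i * a k) * (c * (a k + a j - ((m : ℝ) + 1) * (a k * a j))) := by
      intro k; rw [hKa, hK'def]; rfl
    rw [Matrix.mul_apply, Finset.sum_congr rfl fun k _ => e k]
    have hs := key (fun x => (1 - a i * x) * (c * (x + a j - ((m : ℝ) + 1) * (x * a j))))
    rw [hs]
    rcases hval i with h1 | h1 <;> rcases hval j with h2 | h2 <;> rw [h1, h2, hc] <;>
      field_simp <;> first | ring1 | exact Or.inl (by ring)
  have hK'K : ∀ i j, (K' * K) i j = c * (1 - a i - a j + (m : ℝ) * (a i * a j)) := by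
    intro i j
    have e : ∀ k, K' i k * K k j
        = (c * (a i + a k - ((m : ℝ) + 1) * (a i * a k))) * (1 - a k * a j) := by
      intro k; rw [hKa, hK'def]; rfl
    rw [Matrix.mul_apply, Finset.sum_congr rfl fun k _ => e k]
    have hs := key (fun x => (c * (a i + x - ((m : ℝ) + 1) * (a i * x))) * (1 - x * a j))
    rw [hs]
    rcases hval i with h1 | h1 <;> rcases hval j with h2 | h2 <;> rw [h1, h2, hc] <;>
      field_simp <;> first | ring1 | exact Or.inl (by ring)
  refine ⟨?_, ?_, ?_, ?_⟩
  · ext i j; rw [Matrix.transpose_apply, hKK', hKK']; ring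
  · ext i j; rw [Matrix.transpose_apply, hK'K, hK'K]; ring
  · ext i j
    have e : ∀ k, (K * K') i k * K k j
        = (c * (1 - a i - a k + (m : ℝ) * (a i * a k))) * (1 - a k * a j) := by
      intro k; rw [hKK', hKa]
    rw [Matrix.mul_apply, Finset.sum_congr rfl fun k _ => e k]
    have hs := key (fun x => (c * (1 - a i - x + (m : ℝ) * (a i * x))) * (1 - x * a j))
    rw [hs]
    rw [hKa]
    rcases hval i with h1 | h1 <;> rcases hval j with h2 | h2 <;> rw [h1, h2, hc] <;>
      field_simp <;> first | ring1 | exact Or.inl (by ring)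
  · ext i j
    have e : ∀ k, (K' * K) i k * K' k j
        = (c * (1 - a i - a k + (m : ℝ) * (a i * a k))) * (c * (a k + a j - ((m : ℝ) + 1) * (a k * a j))) := by
      intro k; rw [hK'K, hK'def]; rfl
    rw [Matrix.mul_apply, Finset.sum_congr rfl fun k _ => e k]
    have hs := key (fun x => (c * (1 - a i - x + (m : ℝ) * (a i * x))) * (c * (x + a j - ((m : ℝ) + 1) * (x * a j))))
    rw [hs]
    show _ = c * (a i + a j - ((m : ℝ) + 1) * (a i * a j))
    rcases hval i with h1 | h1 <;> rcases hval j with h2 | h2 <;> rw [h1, h2, hc] <;>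
      field_simp <;> first | ring1 | exact Or.inl (by ring)
end

section
/- The graph K_{m,m}^{−e}, obtained from the complete bipartite graph K_{m,m} by deleting one edge, is both positively and negatively pseudo-invertible: with adjacency matrix A = [[0, K],[Kᵀ, 0]] where K = 𝟏𝟏ᵀ − e₁e₁ᵀ, the matrix D A† D is entrywise nonnegative for D = diag(D₊, D₋) with D₊ = diag(−1,1,...,1), D₋ = diag(1,−1,...,−1), and D A† D is entrywise nonpositive for D = diag(D₊, −D₋). -/
open Matrix

lemma sumsplit {m : ℕ} (hm : 2 ≤ m) (f : Fin m → ℝ) (a b : ℝ)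
    (h0 : ∀ k : Fin m, (k : ℕ) = 0 → f k = a) (h1 : ∀ k : Fin m, (k : ℕ) ≠ 0 → f k = b) :
    ∑ k, f k = a + ((m : ℝ) - 1) * b := by
  have hz : (0 : ℕ) < m := by omega
  have hfe : f = fun k => (if k = (⟨0, hz⟩ : Fin m) then a - b else 0) + b := by
    funext k
    by_cases hk : (k : ℕ) = 0
    · have : k = ⟨0, hz⟩ := Fin.ext hk
      simp only [if_pos this]; have := h0 k hk; linarith
    · have : k ≠ ⟨0, hz⟩ := fun h => hk (by simp [h])
      simp [this, h1 k hk]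
  rw [hfe, Finset.sum_add_distrib, Finset.sum_ite_eq' Finset.univ]
  simp [Finset.card_univ]
  ring

/-- Auxiliary projection matrix. -/
noncomputable def Pmat (m : ℕ) : Matrix (Fin m) (Fin m) ℝ := Matrix.of fun i j =>
  if (i : ℕ) = 0 then (if (j : ℕ) = 0 then 1 else 0)
  else (if (j : ℕ) = 0 then 0 else 1 / ((m : ℝ) - 1))

/-- `K_{m,m}^{−e}` is positively and negatively pseudo-invertible: with
`A = [[0,K],[Kᵀ,0]]`, `A† = [[0,(K†)ᵀ],[K†,0]]`, `D A† D ≥ 0` for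
`D = diag(D₊,D₋)`, `D₊ = diag(−1,1,…,1)`, `D₋ = diag(1,−1,…,−1)`, and `D A† D ≤ 0`
for `D = diag(D₊,−D₋)`. -/
theorem stmt_15 (m : ℕ) (hm : 2 ≤ m)
    (K Kd : Matrix (Fin m) (Fin m) ℝ)
    (hK : ∀ i j, K i j = if (i : ℕ) = 0 ∧ (j : ℕ) = 0 then 0 else 1)
    (hKd : ∀ i j, Kd i j = (1 / ((m : ℝ) - 1)) *
      ((if (i : ℕ) = 0 then (1:ℝ) else 0) + (if (j : ℕ) = 0 then (1:ℝ) else 0)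
        - ((m : ℝ) + 1) * (if (i : ℕ) = 0 ∧ (j : ℕ) = 0 then (1:ℝ) else 0)))
    (A Ad : Matrix (Fin m ⊕ Fin m) (Fin m ⊕ Fin m) ℝ)
    (hA : A = Matrix.fromBlocks 0 K Kᵀ 0)
    (hAd : Ad = Matrix.fromBlocks 0 Kdᵀ Kd 0) :
    IsMoorePenrose A Ad ∧
    (∀ i j, 0 ≤ (Matrix.diagonal
        (Sum.elim (fun i : Fin m => if (i : ℕ) = 0 then (-1:ℝ) else 1)
                  (fun i : Fin m => if (i : ℕ) = 0 then (1:ℝ) else -1)) * Ad *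
      Matrix.diagonal
        (Sum.elim (fun i : Fin m => if (i : ℕ) = 0 then (-1:ℝ) else 1)
                  (fun i : Fin m => if (i : ℕ) = 0 then (1:ℝ) else -1))) i j) ∧
    (∀ i j, (Matrix.diagonal
        (Sum.elim (fun i : Fin m => if (i : ℕ) = 0 then (-1:ℝ) else 1)
                  (fun i : Fin m => -(if (i : ℕ) = 0 then (1:ℝ) else -1))) * Ad *
      Matrix.diagonal
        (Sum.elim (fun i : Fin m => if (i : ℕ) = 0 then (-1:ℝ) else 1)
                  (fun i : Fin m => -(if (i : ℕ) = 0 then (1:ℝ) else -1)))) i j ≤ 0) := by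
  have hm' : (2 : ℝ) ≤ (m : ℝ) := by exact_mod_cast hm
  have hcpos : (0 : ℝ) < (m : ℝ) - 1 := by linarith
  have hc : ((m : ℝ) - 1) ≠ 0 := ne_of_gt hcpos
  set c : ℝ := 1 / ((m : ℝ) - 1) with hcdef
  have hcnn : (0 : ℝ) ≤ c := by rw [hcdef]; positivity
  have hcnn' : (0 : ℝ) ≤ ((m : ℝ) - 1)⁻¹ := inv_nonneg.mpr (le_of_lt hcpos)
  -- entry values of K
  have hKa : ∀ i j : Fin m, (i : ℕ) = 0 → (j : ℕ) = 0 → K i j = 0 := by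
    intro i j hi hj; rw [hK]; simp [hi, hj]
  have hKb : ∀ i j : Fin m, ¬((i : ℕ) = 0 ∧ (j : ℕ) = 0) → K i j = 1 := by
    intro i j h; rw [hK, if_neg h]
  -- entry values of Kd
  have hKdA : ∀ i j : Fin m, (i : ℕ) = 0 → (j : ℕ) = 0 → Kd i j = -1 := by
    intro i j hi hj; rw [hKd]; simp only [hi, hj, if_true, and_self]
    rw [hcdef]; field_simp; ring
  have hKdB : ∀ i j : Fin m, (i : ℕ) = 0 → (j : ℕ) ≠ 0 → Kd i j = c := by
    intro i j hi hj; rw [hKd]; simp [hi, hj]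
  have hKdC : ∀ i j : Fin m, (i : ℕ) ≠ 0 → (j : ℕ) = 0 → Kd i j = c := by
    intro i j hi hj; rw [hKd]; simp [hi, hj]
  have hKdD : ∀ i j : Fin m, (i : ℕ) ≠ 0 → (j : ℕ) ≠ 0 → Kd i j = 0 := by
    intro i j hi hj; rw [hKd]; simp [hi, hj]
  -- symmetry
  have hKsymm : Kᵀ = K := by
    ext i j; rw [transpose_apply, hK, hK]; simp [and_comm]
  have hKdsymm : Kdᵀ = Kd := by
    ext i j
    rw [transpose_apply, hKd, hKd]
    simp only [show ((j : ℕ) = 0 ∧ (i : ℕ) = 0) ↔ ((i : ℕ) = 0 ∧ (j : ℕ) = 0) from and_comm]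
    ring
  have hPsymm : (Pmat m)ᵀ = Pmat m := by
    ext i j; rw [transpose_apply]
    by_cases hi : (i : ℕ) = 0 <;> by_cases hj : (j : ℕ) = 0 <;> simp [Pmat, hi, hj]
  -- value lemmas for Pmat
  have hPa : ∀ i j : Fin m, (i : ℕ) = 0 → (j : ℕ) = 0 → Pmat m i j = 1 := by
    intro i j hi hj; simp [Pmat, hi, hj]
  have hPb : ∀ i j : Fin m, (i : ℕ) = 0 → (j : ℕ) ≠ 0 → Pmat m i j = 0 := by
    intro i j hi hj; simp [Pmat, hi, hj]
  have hPc : ∀ i j : Fin m, (i : ℕ) ≠ 0 → (j : ℕ) = 0 → Pmat m i j = 0 := by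
    intro i j hi hj; simp [Pmat, hi, hj]
  have hPd : ∀ i j : Fin m, (i : ℕ) ≠ 0 → (j : ℕ) ≠ 0 → Pmat m i j = c := by
    intro i j hi hj; simp [Pmat, hi, hj, hcdef]
  -- products
  have hKKd : K * Kd = Pmat m := by
    ext i j; rw [mul_apply]
    by_cases hi : (i : ℕ) = 0 <;> by_cases hj : (j : ℕ) = 0
    · rw [sumsplit hm _ 0 c
        (fun k hk => by rw [hKa i k hi hk]; ring)
        (fun k hk => by rw [hKb i k (by simp [hk]), hKdC k j hk hj]; ring),
        hPa i j hi hj, hcdef]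
      field_simp; ring
    · rw [sumsplit hm _ 0 0
        (fun k hk => by rw [hKa i k hi hk]; ring)
        (fun k hk => by rw [hKb i k (by simp [hk]), hKdD k j hk hj]; ring),
        hPb i j hi hj]
      ring
    · rw [sumsplit hm _ (-1) c
        (fun k hk => by rw [hKb i k (by simp [hi]), hKdA k j hk hj]; ring)
        (fun k hk => by rw [hKb i k (by simp [hi]), hKdC k j hk hj]; ring),
        hPc i j hi hj, hcdef]
      field_simp; ring
    · rw [sumsplit hm _ c 0
        (fun k hk => by rw [hKb i k (by simp [hi]), hKdB k j hk hj]; ring)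
        (fun k hk => by rw [hKb i k (by simp [hi]), hKdD k j hk hj]; ring),
        hPd i j hi hj]
      ring
  have hKdK : Kd * K = Pmat m := by
    have : Kd * K = (K * Kd)ᵀ := by rw [transpose_mul, hKsymm, hKdsymm]
    rw [this, hKKd, hPsymm]
  have hPK : Pmat m * K = K := by
    ext i j; rw [mul_apply]
    by_cases hi : (i : ℕ) = 0
    · rw [sumsplit hm _ (K i j) 0
        (fun k hk => by
          have hki : k = i := Fin.ext (by rw [hk, hi])
          rw [hki, hPa i i hi hi, one_mul])
        (fun k hk => by rw [hPb i k hi hk]; ring)]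
      ring
    · by_cases hj : (j : ℕ) = 0
      · rw [sumsplit hm _ 0 c
          (fun k hk => by rw [hPc i k hi hk]; ring)
          (fun k hk => by rw [hPd i k hi hk, hKb k j (by simp [hk]), mul_one]),
          hKb i j (by simp [hi]), hcdef]
        field_simp; ring
      · rw [sumsplit hm _ 0 c
          (fun k hk => by rw [hPc i k hi hk]; ring)
          (fun k hk => by rw [hPd i k hi hk, hKb k j (by simp [hj]), mul_one]),
          hKb i j (by simp [hi]), hcdef]
        field_simp; ring
  have hPKd : Pmat m * Kd = Kd := by
    ext i j; rw [mul_apply]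
    by_cases hi : (i : ℕ) = 0
    · rw [sumsplit hm _ (Kd i j) 0
        (fun k hk => by
          have hki : k = i := Fin.ext (by rw [hk, hi])
          rw [hki, hPa i i hi hi, one_mul])
        (fun k hk => by rw [hPb i k hi hk]; ring)]
      ring
    · by_cases hj : (j : ℕ) = 0
      · rw [sumsplit hm _ 0 (c * c)
          (fun k hk => by rw [hPc i k hi hk]; ring)
          (fun k hk => by rw [hPd i k hi hk, hKdC k j hk hj]),
          hKdC i j hi hj, hcdef]
        field_simp; ring
      · rw [sumsplit hm _ 0 0
          (fun k hk => by rw [hPc i k hi hk]; ring)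
          (fun k hk => by rw [hPd i k hi hk, hKdD k j hk hj, mul_zero]),
          hKdD i j hi hj]
        ring
  -- block products
  have hAAd : A * Ad = fromBlocks (Pmat m) 0 0 (Pmat m) := by
    rw [hA, hAd, fromBlocks_multiply]
    simp [hKsymm, hKdsymm, hKKd]
  have hAdA : Ad * A = fromBlocks (Pmat m) 0 0 (Pmat m) := by
    rw [hA, hAd, fromBlocks_multiply]
    simp [hKsymm, hKdsymm, hKdK]
  refine ⟨⟨?_, ?_, ?_, ?_⟩, ?_, ?_⟩
  · rw [hAAd, fromBlocks_transpose]; simp [hPsymm]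
  · rw [hAdA, fromBlocks_transpose]; simp [hPsymm]
  · rw [hAAd, hA, fromBlocks_multiply]
    simp [hKsymm, hPK]
  · rw [hAdA, hAd, fromBlocks_multiply]
    simp [hKdsymm, hPKd]
  · intro i j
    rw [hAd, Matrix.mul_diagonal, Matrix.diagonal_mul]
    rcases i with a | a <;> rcases j with b | b
    · simp
    · simp only [Sum.elim_inl, Sum.elim_inr, fromBlocks_apply₁₂, transpose_apply]
      by_cases ha : (a : ℕ) = 0 <;> by_cases hb : (b : ℕ) = 0
      · rw [hKdA b a hb ha]; simp [ha, hb]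
      · rw [hKdC b a hb ha]; simp [ha, hb, hcdef]; linarith
      · rw [hKdB b a hb ha]; simp [ha, hb, hcdef]; linarith
      · rw [hKdD b a hb ha]; simp [ha, hb]
    · simp only [Sum.elim_inl, Sum.elim_inr, fromBlocks_apply₂₁]
      by_cases ha : (a : ℕ) = 0 <;> by_cases hb : (b : ℕ) = 0
      · rw [hKdA a b ha hb]; simp [ha, hb]
      · rw [hKdB a b ha hb]; simp [ha, hb, hcdef]; linarith
      · rw [hKdC a b ha hb]; simp [ha, hb, hcdef]; linarith
      · rw [hKdD a b ha hb]; simp [ha, hb]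
    · simp
  · intro i j
    rw [hAd, Matrix.mul_diagonal, Matrix.diagonal_mul]
    rcases i with a | a <;> rcases j with b | b
    · simp
    · simp only [Sum.elim_inl, Sum.elim_inr, fromBlocks_apply₁₂, transpose_apply]
      by_cases ha : (a : ℕ) = 0 <;> by_cases hb : (b : ℕ) = 0
      · rw [hKdA b a hb ha]; simp [ha, hb]
      · rw [hKdC b a hb ha]; simp [ha, hb, hcdef]; linarith
      · rw [hKdB b a hb ha]; simp [ha, hb, hcdef]; linarith
      · rw [hKdD b a hb ha]; simp [ha, hb]
    · simp only [Sum.elim_inl, Sum.elim_inr, fromBlocks_apply₂₁]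
      by_cases ha : (a : ℕ) = 0 <;> by_cases hb : (b : ℕ) = 0
      · rw [hKdA a b ha hb]; simp [ha, hb]
      · rw [hKdB a b ha hb]; simp [ha, hb, hcdef]; linarith
      · rw [hKdC a b ha hb]; simp [ha, hb, hcdef]; linarith
      · rw [hKdD a b ha hb]; simp [ha, hb]
    · simp
end

section
/- Let G be a simple connected graph on k labeled vertices with adjacency matrix 𝒜, and let m₁,...,m_k ≥ 1. The G-complete multipartitioned graph G_{m₁,...,m_k} of order m = m₁+...+m_k (each vertex i blown up to an independent set of m_i vertices, with complete joins along edges of G) has spectrum consisting of the eigenvalue 0 with multiplicity m − k together with all eigenvalues of the k×k matrix M^{1/2} 𝒜 M^{1/2}, where M = diag(m₁,...,m_k). -/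
open Matrix

open Polynomial in
lemma eval_charpoly_aux {n : Type*} [Fintype n] [DecidableEq n] (M : Matrix n n ℝ) (x : ℝ) :
    M.charpoly.eval x = (x • (1 : Matrix n n ℝ) - M).det := by
  have : M.charpoly.eval x = (evalRingHom x) (Matrix.charmatrix M).det := rfl
  rw [this, RingHom.map_det]
  congr 1
  ext i j
  by_cases h : i = j
  · subst h; simp [Matrix.charmatrix_apply_eq, Matrix.one_apply]
  · simp [Matrix.charmatrix_apply_ne _ _ _ h, Matrix.one_apply, h]

/-- Weinstein–Aronszajn for `x • 1 - B*C`, `x ≠ 0`. -/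
lemma det_smul_one_sub_mul {p q : Type*} [Fintype p] [Fintype q] [DecidableEq p] [DecidableEq q]
    (B : Matrix p q ℝ) (C : Matrix q p ℝ) {x : ℝ} (hx : x ≠ 0) :
    (x • (1 : Matrix p p ℝ) - B * C).det =
      x ^ Fintype.card p * (1 + B * ((-x⁻¹) • C)).det := by
  have h1 : x • (1 : Matrix p p ℝ) - B * C = x • (1 + B * ((-x⁻¹) • C)) := by
    rw [smul_add, Matrix.mul_smul, smul_smul]
    field_simp
    simp [sub_eq_add_neg]
  rw [h1, Matrix.det_smul]

/-- The `G`-complete multipartitioned graph `G_{m₁,…,m_k}` (each vertex `i` of `G` blown up into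
an independent set of `m i` vertices) has spectrum consisting of `0` with multiplicity `m − k`
together with the eigenvalues of `M^{1/2} 𝒜 M^{1/2}`, `M = diag(m₁,…,m_k)`; equivalently its
characteristic polynomial is `X^(m−k)` times that of `M^{1/2} 𝒜 M^{1/2}`. -/
theorem stmt_16 (k : ℕ) (G : SimpleGraph (Fin k)) [DecidableRel G.Adj]
    (hconn : G.Connected) (m : Fin k → ℕ) (hm : ∀ i, 1 ≤ m i)
    (A : Matrix (Σ i : Fin k, Fin (m i)) (Σ i : Fin k, Fin (m i)) ℝ)
    (hA : ∀ p q, A p q = G.adjMatrix ℝ p.1 q.1) :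
    A.charpoly = Polynomial.X ^ ((∑ i, m i) - k) *
      (Matrix.diagonal (fun i => Real.sqrt (m i)) * G.adjMatrix ℝ *
        Matrix.diagonal (fun i => Real.sqrt (m i))).charpoly := by
  classical
  set 𝒜 := G.adjMatrix ℝ with h𝒜
  set s : Fin k → ℝ := fun i => Real.sqrt (m i) with hsdef
  set S : Matrix (Fin k) (Fin k) ℝ := Matrix.diagonal s * 𝒜 * Matrix.diagonal s with hS
  have hs : ∀ i, s i ≠ 0 := fun i => by
    have : (0:ℝ) < m i := by exact_mod_cast hm i
    simp only [hsdef]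
    positivity
  have hss : ∀ i, s i * s i = (m i : ℝ) := fun i =>
    Real.mul_self_sqrt (by positivity)
  -- B and C with A = B * C
  set B : Matrix (Σ i : Fin k, Fin (m i)) (Fin k) ℝ := fun p j => 𝒜 p.1 j with hB
  set C : Matrix (Fin k) (Σ i : Fin k, Fin (m i)) ℝ := fun j q => if j = q.1 then 1 else 0
    with hC
  have hBC : B * C = A := by
    ext p q
    rw [hA, Matrix.mul_apply]
    simp [Matrix.mul_apply, hB, hC]
  have hCB : C * B = Matrix.diagonal (fun i => (m i : ℝ)) * 𝒜 := by
    ext i j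
    rw [Matrix.diagonal_mul, Matrix.mul_apply]
    simp only [Matrix.mul_apply, hB, hC, ite_mul, one_mul, zero_mul]
    calc (∑ q : (Σ i : Fin k, Fin (m i)), if i = q.1 then 𝒜 q.1 j else 0)
        = ∑ a : Fin k, ∑ _b : Fin (m a), (if i = a then 𝒜 a j else 0) := by
          rw [← Finset.univ_sigma_univ, Finset.sum_sigma]
      _ = ∑ a : Fin k, (m a : ℝ) * (if i = a then 𝒜 a j else 0) := by
          simp [Finset.sum_const, nsmul_eq_mul]
      _ = (m i : ℝ) * 𝒜 i j := by
          simp [mul_ite, Finset.sum_ite_eq]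
  have hcardn : Fintype.card (Σ i : Fin k, Fin (m i)) = ∑ i, m i := by
    simp [Fintype.card_sigma]
  have hkN : k ≤ ∑ i, m i := by
    calc k = ∑ _i : Fin k, 1 := by simp
    _ ≤ ∑ i, m i := Finset.sum_le_sum fun i _ => hm i
  -- similarity : det (x•1 - S) = det (x•1 - diag m * 𝒜)
  have hsim : ∀ x : ℝ, (x • (1 : Matrix (Fin k) (Fin k) ℝ) - S).det =
      (x • (1 : Matrix (Fin k) (Fin k) ℝ) - Matrix.diagonal (fun i => (m i : ℝ)) * 𝒜).det := by
    intro x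
    set s' : Fin k → ℝ := fun i => (s i)⁻¹ with hs'def
    have hinv : Matrix.diagonal s' * Matrix.diagonal s = 1 := by
      rw [Matrix.diagonal_mul_diagonal]
      have : (fun i => s' i * s i) = fun _ => (1:ℝ) := by
        funext i; exact inv_mul_cancel₀ (hs i)
      rw [this, Matrix.diagonal_one]
    have hdm : Matrix.diagonal s' * Matrix.diagonal (fun i => (m i : ℝ)) = Matrix.diagonal s := by
      rw [Matrix.diagonal_mul_diagonal]
      have : (fun i => s' i * (m i : ℝ)) = s := by
        funext i
        rw [← hss i, hs'def, ← mul_assoc, inv_mul_cancel₀ (hs i), one_mul]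
      rw [this]
    have key : Matrix.diagonal s' * (x • (1 : Matrix (Fin k) (Fin k) ℝ) -
        Matrix.diagonal (fun i => (m i : ℝ)) * 𝒜) * Matrix.diagonal s =
        x • (1 : Matrix (Fin k) (Fin k) ℝ) - S := by
      rw [Matrix.mul_sub, Matrix.sub_mul, Matrix.mul_smul, Matrix.mul_one, Matrix.smul_mul, hinv,
        ← Matrix.mul_assoc (Matrix.diagonal s') (Matrix.diagonal fun i => (m i : ℝ)) 𝒜, hdm, hS]
    rw [← key, Matrix.det_mul, Matrix.det_mul, mul_right_comm, ← Matrix.det_mul, hinv,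
      Matrix.det_one, one_mul]
  -- main identity, via evaluation on ℝ \ {0}
  apply Polynomial.eq_of_infinite_eval_eq
  have hinf : Set.Infinite {x : ℝ | x ≠ 0} :=
    (Set.finite_singleton (0:ℝ)).infinite_compl
  refine hinf.mono ?_
  intro x hx
  have hx : x ≠ 0 := hx
  simp only [Set.mem_setOf_eq, Polynomial.eval_mul, Polynomial.eval_pow, Polynomial.eval_X]
  rw [eval_charpoly_aux, eval_charpoly_aux, ← hBC,
    det_smul_one_sub_mul B C hx, Matrix.det_one_add_mul_comm, hsim]
  have h2 : (1 + (-x⁻¹) • C * B : Matrix (Fin k) (Fin k) ℝ) =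
      x⁻¹ • (x • (1 : Matrix (Fin k) (Fin k) ℝ) - Matrix.diagonal (fun i => (m i : ℝ)) * 𝒜) := by
    rw [smul_sub, smul_smul, inv_mul_cancel₀ hx, one_smul, Matrix.smul_mul, hCB,
      sub_eq_add_neg, ← neg_smul]
  rw [h2, Matrix.det_smul, hcardn]
  rw [Fintype.card_fin, ← mul_assoc]
  congr 1
  conv_lhs => rw [← Nat.sub_add_cancel hkN]
  rw [pow_add, mul_assoc, ← mul_pow, mul_inv_cancel₀ hx, one_pow, mul_one]
end

section
/- With A = (𝒜_{ij} E_{m_i,m_j}) the adjacency matrix of the G-complete multipartitioned graph G_{m₁,...,m_k} and M = diag(m₁,...,m_k), the Moore-Penrose inverse of A is A† = (β_{ij} E_{m_i,m_j}), where the k×k matrix B = (β_{ij}) equals M^{−1/2} (M^{1/2} 𝒜 M^{1/2})† M^{−1/2}. -/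
open Matrix

lemma lift_mul {k : ℕ} (m : Fin k → ℕ) (X Y : Matrix (Fin k) (Fin k) ℝ) :
    (Matrix.of fun (p q : Σ i : Fin k, Fin (m i)) => X p.1 q.1) *
      (Matrix.of fun (p q : Σ i : Fin k, Fin (m i)) => Y p.1 q.1) =
    Matrix.of fun (p q : Σ i : Fin k, Fin (m i)) =>
      (X * Matrix.diagonal (fun i => (m i : ℝ)) * Y) p.1 q.1 := by
  ext p q
  rw [Matrix.mul_assoc X _ Y]
  simp only [Matrix.of_apply, Matrix.mul_apply, Matrix.diagonal_mul, Finset.mul_sum]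
  rw [← Finset.univ_sigma_univ, Finset.sum_sigma]
  simp only [Finset.sum_const, Finset.card_univ, Fintype.card_fin, nsmul_eq_mul]
  refine Finset.sum_congr rfl fun i _ => ?_
  simp [Matrix.diagonal_apply, mul_ite, ite_mul]
  ring

lemma lift_transpose {k : ℕ} (m : Fin k → ℕ) (X : Matrix (Fin k) (Fin k) ℝ) :
    (Matrix.of fun (p q : Σ i : Fin k, Fin (m i)) => X p.1 q.1)ᵀ =
    Matrix.of fun (p q : Σ i : Fin k, Fin (m i)) => Xᵀ p.1 q.1 := by
  ext p q; rfl

/-- The Moore-Penrose inverse of the adjacency matrix `A = (𝒜_{ij} E_{m_i,m_j})` of the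
`G`-complete multipartitioned graph is `A† = (β_{ij} E_{m_i,m_j})` where
`B = (β_{ij}) = M^{−1/2} (M^{1/2} 𝒜 M^{1/2})† M^{−1/2}`. -/
theorem stmt_17 (k : ℕ) (G : SimpleGraph (Fin k)) [DecidableRel G.Adj]
    (hconn : G.Connected) (m : Fin k → ℕ) (hm : ∀ i, 1 ≤ m i)
    (S : Matrix (Fin k) (Fin k) ℝ)
    (hS : IsMoorePenrose
      (Matrix.diagonal (fun i => Real.sqrt (m i)) * G.adjMatrix ℝ *
        Matrix.diagonal (fun i => Real.sqrt (m i))) S)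
    (A Ad : Matrix (Σ i : Fin k, Fin (m i)) (Σ i : Fin k, Fin (m i)) ℝ)
    (hA : ∀ p q, A p q = G.adjMatrix ℝ p.1 q.1)
    (hAd : ∀ p q, Ad p q =
      (Matrix.diagonal (fun i => (Real.sqrt (m i))⁻¹) * S *
        Matrix.diagonal (fun i => (Real.sqrt (m i))⁻¹)) p.1 q.1) :
    IsMoorePenrose A Ad := by
  classical
  set N : Matrix (Fin k) (Fin k) ℝ := Matrix.diagonal (fun i => Real.sqrt (m i)) with hN
  set Ninv : Matrix (Fin k) (Fin k) ℝ :=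
    Matrix.diagonal (fun i => (Real.sqrt (m i))⁻¹) with hNinv
  set 𝒜 : Matrix (Fin k) (Fin k) ℝ := G.adjMatrix ℝ with h𝒜
  set K : Matrix (Fin k) (Fin k) ℝ := N * 𝒜 * N with hK
  set B : Matrix (Fin k) (Fin k) ℝ := Ninv * S * Ninv with hB
  set Md : Matrix (Fin k) (Fin k) ℝ := Matrix.diagonal (fun i => (m i : ℝ)) with hMd
  have hsqrt_ne : ∀ i, Real.sqrt (m i) ≠ 0 := fun i =>
    Real.sqrt_ne_zero'.mpr (by exact_mod_cast Nat.lt_of_lt_of_le Nat.zero_lt_one (hm i))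
  have hNNinv : N * Ninv = 1 := by
    rw [hN, hNinv, Matrix.diagonal_mul_diagonal,
      show (fun i => Real.sqrt (m i) * (Real.sqrt (m i))⁻¹) = fun _ : Fin k => (1 : ℝ) from
        funext fun i => mul_inv_cancel₀ (hsqrt_ne i), Matrix.diagonal_one]
  have hNinvN : Ninv * N = 1 := by
    rw [hN, hNinv, Matrix.diagonal_mul_diagonal,
      show (fun i => (Real.sqrt (m i))⁻¹ * Real.sqrt (m i)) = fun _ : Fin k => (1 : ℝ) from
        funext fun i => inv_mul_cancel₀ (hsqrt_ne i), Matrix.diagonal_one]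
  have hNN : N * N = Md := by
    rw [hN, hMd, Matrix.diagonal_mul_diagonal]
    exact congrArg _ (funext fun i => Real.mul_self_sqrt (Nat.cast_nonneg _))
  -- cancellation helpers in right-assoc normal form
  have c1 : ∀ X : Matrix (Fin k) (Fin k) ℝ, Ninv * (N * X) = X := fun X => by
    rw [← Matrix.mul_assoc, hNinvN, Matrix.one_mul]
  have c2 : ∀ X : Matrix (Fin k) (Fin k) ℝ, N * (Ninv * X) = X := fun X => by
    rw [← Matrix.mul_assoc, hNNinv, Matrix.one_mul]
  have hMdNN : ∀ X Y : Matrix (Fin k) (Fin k) ℝ, X * Md * Y = X * (N * (N * Y)) := by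
    intro X Y
    rw [← hNN, Matrix.mul_assoc, Matrix.mul_assoc]
  -- the key k-level identities
  have e1 : 𝒜 * Md * B = Ninv * (K * S) * Ninv := by
    rw [hMdNN, hB, hK]
    simp only [Matrix.mul_assoc, c1, c2, hNNinv, Matrix.mul_one]
  have e2 : B * Md * 𝒜 = Ninv * (S * K) * Ninv := by
    rw [hMdNN, hB, hK]
    simp only [Matrix.mul_assoc, c1, c2, hNNinv, Matrix.mul_one]
  have e3 : (𝒜 * Md * B) * Md * 𝒜 = Ninv * (K * S * K) * Ninv := by
    rw [e1, hMdNN, hK]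
    simp only [Matrix.mul_assoc, c1, c2, hNNinv, Matrix.mul_one]
  have e4 : (B * Md * 𝒜) * Md * B = Ninv * (S * K * S) * Ninv := by
    rw [e2, hMdNN, hB, hK]
    simp only [Matrix.mul_assoc, c1, c2, hNNinv, Matrix.mul_one]
  have h𝒜eq : Ninv * K * Ninv = 𝒜 := by
    rw [hK]
    simp only [Matrix.mul_assoc, c1, hNNinv, Matrix.mul_one]
  have hNT : Nᵀ = N := Matrix.diagonal_transpose _
  have hNinvT : Ninvᵀ = Ninv := Matrix.diagonal_transpose _
  obtain ⟨p1, p2, p3, p4⟩ := hS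
  -- block forms
  have hA' : A = Matrix.of fun (p q : Σ i : Fin k, Fin (m i)) => 𝒜 p.1 q.1 := by
    ext p q; exact hA p q
  have hAd' : Ad = Matrix.of fun (p q : Σ i : Fin k, Fin (m i)) => B p.1 q.1 := by
    ext p q; exact hAd p q
  have lcong : ∀ X Y : Matrix (Fin k) (Fin k) ℝ, X = Y →
      (Matrix.of fun (p q : Σ i : Fin k, Fin (m i)) => X p.1 q.1) =
        Matrix.of fun (p q : Σ i : Fin k, Fin (m i)) => Y p.1 q.1 := by
    intro X Y h; rw [h]
  refine ⟨?_, ?_, ?_, ?_⟩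
  · rw [hA', hAd', lift_mul, lift_transpose]
    refine lcong _ _ ?_
    rw [← hMd, e1, Matrix.transpose_mul, Matrix.transpose_mul, hNinvT, p1]
    simp only [Matrix.mul_assoc]
  · rw [hA', hAd', lift_mul, lift_transpose]
    refine lcong _ _ ?_
    rw [← hMd, e2, Matrix.transpose_mul, Matrix.transpose_mul, hNinvT, p2]
    simp only [Matrix.mul_assoc]
  · rw [hA', hAd', lift_mul, lift_mul]
    refine lcong _ _ ?_
    rw [← hMd, e3, p3, h𝒜eq]
  · rw [hA', hAd', lift_mul, lift_mul]
    refine lcong _ _ ?_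
    rw [← hMd, e4, p4]
end

section
/- Let G^B be a simple connected graph of order k with adjacency matrix B, and let G^A be the corona graph of order m = 2k obtained by attaching a pendant vertex to each vertex of G^B, so A = [[0, I],[I, B]] in block form. Then A is integrally invertible with A⁻¹ = [[−B, I],[I, 0]], and A⁻¹ is negatively signable by D = diag(I, −I). Moreover, if G^B is bipartite with a signature matrix D₋ such that D₋ B D₋ ≤ 0, then D = diag(D₋, D₋) signs A⁻¹ to a nonnegative matrix, so G^A is also positively integrally invertible. -/
open Matrix

/-- For the corona graph of a simple connected graph `G^B` (a pendant vertex attached to each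
vertex), with adjacency matrix `A = [[0,I],[I,B]]`: `A` is integrally invertible with
`A⁻¹ = [[−B,I],[I,0]]`, negatively signable by `D = diag(I,−I)`; and if `B` is signable to a
nonpositive matrix by `D₋` (e.g. `G^B` bipartite), then `D = diag(D₋,D₋)` signs `A⁻¹` to a
nonnegative matrix, so the corona graph is also positively integrally invertible. -/
theorem stmt_18 (k : ℕ) (G : SimpleGraph (Fin k)) [DecidableRel G.Adj]
    (hconn : G.Connected)
    (A : Matrix (Fin k ⊕ Fin k) (Fin k ⊕ Fin k) ℝ)
    (hA : A = Matrix.fromBlocks 0 1 1 (G.adjMatrix ℝ)) :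
    (A.det = 1 ∨ A.det = -1) ∧
    A⁻¹ = Matrix.fromBlocks (-(G.adjMatrix ℝ)) 1 1 0 ∧
    (∀ i j, (Matrix.diagonal (Sum.elim (fun _ : Fin k => (1:ℝ)) (fun _ : Fin k => (-1:ℝ))) *
        A⁻¹ *
      Matrix.diagonal (Sum.elim (fun _ : Fin k => (1:ℝ)) (fun _ : Fin k => (-1:ℝ)))) i j ≤ 0) ∧
    (∀ dm : Fin k → ℝ, IsSign dm →
      (∀ i j, (Matrix.diagonal dm * G.adjMatrix ℝ * Matrix.diagonal dm) i j ≤ 0) →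
      ∀ i j, 0 ≤ (Matrix.diagonal (Sum.elim dm dm) * A⁻¹ *
        Matrix.diagonal (Sum.elim dm dm)) i j) := by
  set B : Matrix (Fin k) (Fin k) ℝ := G.adjMatrix ℝ with hB
  set C : Matrix (Fin k ⊕ Fin k) (Fin k ⊕ Fin k) ℝ := Matrix.fromBlocks (-B) 1 1 0 with hC
  have hAC : A * C = 1 := by
    rw [hA, hC, Matrix.fromBlocks_multiply]
    simp [← Matrix.fromBlocks_one]
  have hCA : C * A = 1 := by
    rw [hA, hC, Matrix.fromBlocks_multiply]
    simp [← Matrix.fromBlocks_one]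
  have hinv : A⁻¹ = C := Matrix.inv_eq_right_inv hAC
  -- determinant
  have hdet : A.det = 1 ∨ A.det = -1 := by
    set P : Matrix (Fin k ⊕ Fin k) (Fin k ⊕ Fin k) ℝ := Matrix.fromBlocks 0 1 1 0 with hP
    have hAfac : A = P * Matrix.fromBlocks 1 B 0 1 := by
      rw [hA, hP, Matrix.fromBlocks_multiply]; simp
    have hCfac : C = P * Matrix.fromBlocks 1 0 (-B) 1 := by
      rw [hC, hP, Matrix.fromBlocks_multiply]; simp
    have hdA : A.det = P.det := by
      rw [hAfac, Matrix.det_mul, Matrix.det_fromBlocks_zero₂₁]; simp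
    have hdC : C.det = P.det := by
      rw [hCfac, Matrix.det_mul, Matrix.det_fromBlocks_zero₁₂]; simp
    have h1 : A.det * A.det = 1 := by
      have h := congrArg Matrix.det hAC
      rw [Matrix.det_mul, Matrix.det_one, hdC, ← hdA] at h
      exact h
    exact mul_self_eq_one_iff.mp h1
  refine ⟨hdet, hinv, ?_, ?_⟩
  · intro i j
    rw [hinv]
    simp only [Matrix.mul_diagonal, Matrix.diagonal_mul]
    rcases i with i | i <;> rcases j with j | j <;>
      simp [hC, Matrix.fromBlocks, Matrix.one_apply]
    · by_cases h : G.Adj i j <;> simp [hB, h]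
    · by_cases h : i = j <;> simp [h]
    · by_cases h : i = j <;> simp [h]
  · intro dm hdm hneg i j
    have hsq : ∀ i, dm i * dm i = 1 := by
      intro i; rcases hdm i with h | h <;> simp [h]
    rw [hinv]
    simp only [Matrix.mul_diagonal, Matrix.diagonal_mul]
    rcases i with i | i <;> rcases j with j | j <;>
      simp [hC, Matrix.fromBlocks, Matrix.one_apply]
    · have := hneg i j
      simp only [Matrix.mul_diagonal, Matrix.diagonal_mul] at this
      nlinarith [this]
    · by_cases h : i = j <;> simp [h, hsq]
    · by_cases h : i = j <;> simp [h, hsq]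
end

section
/- Let A = [[0, I],[I, B]] be the adjacency matrix of the corona graph of a graph G^B with k×k adjacency matrix B. Then λ is an eigenvalue of A if and only if λ = (μ ± √(μ² + 4))/2 for some eigenvalue μ of B, and consequently the spectral power satisfies Λ^pow(A) = Σ_{μ ∈ σ(B)} √(μ² + 4) ≥ max{Λ^pow(B), 2k}, where Λ^pow of a symmetric matrix is the sum of absolute values of its eigenvalues (counted with multiplicity). -/
open Matrix Polynomial

section Aux

variable {n : Type*} [Fintype n] [DecidableEq n]

lemma mem_spectrum_iff_det' (M : Matrix n n ℝ) (x : ℝ) :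
    x ∈ spectrum ℝ M ↔ (x • (1 : Matrix n n ℝ) - M).det = 0 := by
  have halg : (algebraMap ℝ (Matrix n n ℝ)) x = x • (1 : Matrix n n ℝ) := by
    rw [Matrix.algebraMap_eq_diagonal]
    ext i j
    by_cases h : i = j <;> simp [h, Matrix.one_apply, Matrix.diagonal_apply]
  rw [spectrum.mem_iff, halg, Matrix.isUnit_iff_isUnit_det, isUnit_iff_ne_zero, not_not]

lemma det_smul_one_sub' {M : Matrix n n ℝ} (hM : M.IsHermitian) (x : ℝ) :
    (x • (1 : Matrix n n ℝ) - M).det = ∏ i, (x - hM.eigenvalues i) := by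
  have hU : (hM.eigenvectorUnitary : Matrix n n ℝ) * star (hM.eigenvectorUnitary : Matrix n n ℝ) = 1 :=
    (Matrix.mem_unitaryGroup_iff).mp hM.eigenvectorUnitary.2
  have key : x • (1 : Matrix n n ℝ) - M
      = (hM.eigenvectorUnitary : Matrix n n ℝ)
        * (x • 1 - diagonal (RCLike.ofReal ∘ hM.eigenvalues))
        * star (hM.eigenvectorUnitary : Matrix n n ℝ) := by
    rw [Matrix.mul_sub, Matrix.sub_mul]
    congr 1
    · rw [Matrix.mul_smul, Matrix.mul_one, Matrix.smul_mul, hU]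
    · exact hM.spectral_theorem
  have hU' : star (hM.eigenvectorUnitary : Matrix n n ℝ) * (hM.eigenvectorUnitary : Matrix n n ℝ) = 1 :=
    (Matrix.mem_unitaryGroup_iff').mp hM.eigenvectorUnitary.2
  rw [key, det_mul, det_mul, mul_comm, ← mul_assoc, ← det_mul, hU', det_one, one_mul]
  have : x • (1 : Matrix n n ℝ) - diagonal (RCLike.ofReal ∘ hM.eigenvalues)
      = diagonal (fun i => x - hM.eigenvalues i) := by
    ext i j
    by_cases h : i = j <;> simp [h, Matrix.one_apply, Matrix.diagonal_apply]
  rw [this, det_diagonal]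

lemma det_corona' {k : ℕ} {B : Matrix (Fin k) (Fin k) ℝ} (hB : B.IsHermitian)
    {x : ℝ} (hx : x ≠ 0) :
    (x • (1 : Matrix (Fin k ⊕ Fin k) (Fin k ⊕ Fin k) ℝ) - fromBlocks 0 1 1 B).det
      = ∏ j, (x ^ 2 - hB.eigenvalues j * x - 1) := by
  have h1 : x • (1 : Matrix (Fin k ⊕ Fin k) (Fin k ⊕ Fin k) ℝ) - fromBlocks 0 1 1 B
      = fromBlocks (x • 1) (-1) (-1) (x • 1 - B) := by
    rw [← Matrix.fromBlocks_one, Matrix.fromBlocks_smul, sub_eq_add_neg,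
      Matrix.fromBlocks_neg, Matrix.fromBlocks_add]
    simp [sub_eq_add_neg]
  letI : Invertible (x • (1 : Matrix (Fin k) (Fin k) ℝ)) :=
    ⟨x⁻¹ • 1, by rw [Matrix.smul_mul, Matrix.mul_smul, Matrix.mul_one, smul_smul,
        inv_mul_cancel₀ hx, one_smul],
      by rw [Matrix.smul_mul, Matrix.mul_smul, Matrix.mul_one, smul_smul,
        mul_inv_cancel₀ hx, one_smul]⟩
  have hinv : ⅟(x • (1 : Matrix (Fin k) (Fin k) ℝ)) = x⁻¹ • 1 := rfl
  rw [h1, Matrix.det_fromBlocks₁₁, hinv]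
  have h2 : (x • 1 - B) - (-1 : Matrix (Fin k) (Fin k) ℝ) * (x⁻¹ • 1) * (-1)
      = (x - x⁻¹) • (1 : Matrix (Fin k) (Fin k) ℝ) - B := by
    rw [sub_smul]
    simp
    abel
  rw [h2, det_smul_one_sub' hB, Matrix.det_smul, det_one, mul_one]
  rw [Fintype.card_fin, show (x:ℝ) ^ k = ∏ _j : Fin k, x by
    simp [Finset.prod_const, Finset.card_univ], ← Finset.prod_mul_distrib]
  refine Finset.prod_congr rfl fun j _ => ?_
  field_simp
  ring

end Aux

/-- For the corona matrix `A = [[0,I],[I,B]]` of a symmetric `B`: `λ` is an eigenvalue of `A`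
iff `λ = (μ ± √(μ²+4))/2` for some eigenvalue `μ` of `B`, and the spectral power satisfies
`Λ^pow(A) = Σ_{μ∈σ(B)} √(μ²+4) ≥ max{Λ^pow(B), 2k}`. -/
theorem stmt_19 (k : ℕ) (B : Matrix (Fin k) (Fin k) ℝ) (hB : B.IsHermitian)
    (hA : (Matrix.fromBlocks (0 : Matrix (Fin k) (Fin k) ℝ) 1 1 B).IsHermitian) :
    (∀ lam : ℝ, lam ∈ spectrum ℝ (Matrix.fromBlocks (0 : Matrix (Fin k) (Fin k) ℝ) 1 1 B) ↔
      ∃ mu ∈ spectrum ℝ B, lam = (mu + Real.sqrt (mu ^ 2 + 4)) / 2 ∨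
        lam = (mu - Real.sqrt (mu ^ 2 + 4)) / 2) ∧
    (∑ i, |hA.eigenvalues i|) = (∑ j, Real.sqrt ((hB.eigenvalues j) ^ 2 + 4)) ∧
    max (∑ j, |hB.eigenvalues j|) ((2 * k : ℕ) : ℝ) ≤ ∑ i, |hA.eigenvalues i| := by
  set A : Matrix (Fin k ⊕ Fin k) (Fin k ⊕ Fin k) ℝ := fromBlocks 0 1 1 B with hAdef
  set μ : Fin k → ℝ := hB.eigenvalues with hμ
  set rp : Fin k → ℝ := fun j => (μ j + Real.sqrt (μ j ^ 2 + 4)) / 2 with hrp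
  set rm : Fin k → ℝ := fun j => (μ j - Real.sqrt (μ j ^ 2 + 4)) / 2 with hrm
  have hfac : ∀ (m x : ℝ),
      (x - (m + Real.sqrt (m ^ 2 + 4)) / 2) * (x - (m - Real.sqrt (m ^ 2 + 4)) / 2)
        = x ^ 2 - m * x - 1 := by
    intro m x
    have hs : Real.sqrt (m ^ 2 + 4) ^ 2 = m ^ 2 + 4 := Real.sq_sqrt (by positivity)
    linear_combination (-1 / 4 : ℝ) * hs
  set p : ℝ[X] := ∏ i, (X - C (hA.eigenvalues i)) with hp_def
  set q : ℝ[X] := ∏ j, ((X - C (rp j)) * (X - C (rm j))) with hq_def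
  have hevalp : ∀ x : ℝ, p.eval x = (x • 1 - A).det := by
    intro x
    rw [det_smul_one_sub' hA, hp_def]
    simp [eval_prod]
  have hevalq : ∀ x : ℝ, q.eval x = ∏ j, (x ^ 2 - μ j * x - 1) := by
    intro x
    rw [hq_def]
    simp only [eval_prod, eval_mul, eval_sub, eval_X, eval_C]
    exact Finset.prod_congr rfl fun j _ => hfac (μ j) x
  have hpq : p = q := by
    apply Polynomial.eq_of_infinite_eval_eq
    apply Set.Infinite.mono (s := {(0 : ℝ)}ᶜ)
    · intro x hx
      have hx0 : x ≠ 0 := hx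
      simp only [Set.mem_setOf_eq]
      rw [hevalp x, hevalq x, hAdef, det_corona' hB hx0]
    · exact Set.Finite.infinite_compl (Set.finite_singleton 0)
  have hrootsp : p.roots = Finset.univ.val.map hA.eigenvalues := by
    have : p = ((Finset.univ.val.map hA.eigenvalues).map fun a => X - C a).prod := by
      rw [Multiset.map_map, hp_def]
      rfl
    rw [this, Polynomial.roots_multiset_prod_X_sub_C]
  have hrootsq : q.roots = Finset.univ.val.map rp + Finset.univ.val.map rm := by
    have hq2 : q = (∏ j, (X - C (rp j))) * (∏ j, (X - C (rm j))) := by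
      rw [hq_def, ← Finset.prod_mul_distrib]
    have hm1 : (∏ j, (X - C (rp j))).Monic :=
      monic_prod_of_monic _ _ fun j _ => monic_X_sub_C _
    have hm2 : (∏ j, (X - C (rm j))).Monic :=
      monic_prod_of_monic _ _ fun j _ => monic_X_sub_C _
    have e1 : (∏ j, (X - C (rp j))).roots = Finset.univ.val.map rp := by
      have : (∏ j, (X - C (rp j))) = ((Finset.univ.val.map rp).map fun a => X - C a).prod := by
        rw [Multiset.map_map]; rfl
      rw [this, Polynomial.roots_multiset_prod_X_sub_C]
    have e2 : (∏ j, (X - C (rm j))).roots = Finset.univ.val.map rm := by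
      have : (∏ j, (X - C (rm j))) = ((Finset.univ.val.map rm).map fun a => X - C a).prod := by
        rw [Multiset.map_map]; rfl
      rw [this, Polynomial.roots_multiset_prod_X_sub_C]
    rw [hq2, Polynomial.roots_mul (mul_ne_zero hm1.ne_zero hm2.ne_zero), e1, e2]
  have hmult : Finset.univ.val.map hA.eigenvalues
      = Finset.univ.val.map rp + Finset.univ.val.map rm := by
    rw [← hrootsp, hpq, hrootsq]
  -- |rp j| + |rm j| = sqrt (μ j ^ 2 + 4)
  have hs0 : ∀ j, |μ j| ≤ Real.sqrt (μ j ^ 2 + 4) := by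
    intro j
    rw [← Real.sqrt_sq_eq_abs]
    exact Real.sqrt_le_sqrt (by nlinarith)
  have habs : ∀ j, |rp j| + |rm j| = Real.sqrt (μ j ^ 2 + 4) := by
    intro j
    obtain ⟨hl, hr⟩ := abs_le.mp (hs0 j)
    have e1 : rp j = (μ j + Real.sqrt (μ j ^ 2 + 4)) / 2 := rfl
    have e2 : rm j = (μ j - Real.sqrt (μ j ^ 2 + 4)) / 2 := rfl
    rw [e1, e2, abs_of_nonneg (by linarith), abs_of_nonpos (by linarith)]
    ring
  -- the sum identity
  have hsum : (∑ i, |hA.eigenvalues i|) = ∑ j, Real.sqrt (μ j ^ 2 + 4) := by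
    have c1 : (∑ i, |hA.eigenvalues i|)
        = ((Finset.univ.val.map hA.eigenvalues).map fun a => |a|).sum := by
      rw [Multiset.map_map]
      rfl
    have c2 : (∑ j, |rp j|) = ((Finset.univ.val.map rp).map fun a => |a|).sum := by
      rw [Multiset.map_map]; rfl
    have c3 : (∑ j, |rm j|) = ((Finset.univ.val.map rm).map fun a => |a|).sum := by
      rw [Multiset.map_map]; rfl
    rw [c1, hmult, Multiset.map_add, Multiset.sum_add, ← c2, ← c3,
      ← Finset.sum_add_distrib]
    exact Finset.sum_congr rfl fun j _ => habs j
  -- spectrum characterizations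
  have hBspec : ∀ m : ℝ, m ∈ spectrum ℝ B ↔ ∃ j, m = μ j := by
    intro m
    rw [mem_spectrum_iff_det' B m, det_smul_one_sub' hB, Finset.prod_eq_zero_iff]
    simp [sub_eq_zero, hμ]
  have hAspec : ∀ lam : ℝ, lam ∈ spectrum ℝ A ↔ ∃ j, lam = rp j ∨ lam = rm j := by
    intro lam
    rw [mem_spectrum_iff_det' A lam, ← hevalp lam, hpq, hq_def]
    simp only [eval_prod, eval_mul, eval_sub, eval_X, eval_C]
    rw [Finset.prod_eq_zero_iff]
    simp [mul_eq_zero, sub_eq_zero]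
  refine ⟨?_, hsum, ?_⟩
  · intro lam
    rw [hAspec lam]
    constructor
    · rintro ⟨j, hj⟩
      exact ⟨μ j, hB.eigenvalues_mem_spectrum_real j, hj⟩
    · rintro ⟨m, hm, hc⟩
      obtain ⟨j, rfl⟩ := (hBspec m).mp hm
      exact ⟨j, hc⟩
  · rw [hsum, max_le_iff]
    constructor
    · apply Finset.sum_le_sum
      intro j _
      rw [← Real.sqrt_sq_eq_abs]
      exact Real.sqrt_le_sqrt (by nlinarith)
    · have h2 : ∀ j : Fin k, (2 : ℝ) ≤ Real.sqrt (μ j ^ 2 + 4) := by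
        intro j
        nlinarith [Real.sq_sqrt (show (0:ℝ) ≤ μ j ^ 2 + 4 by positivity),
          Real.sqrt_nonneg (μ j ^ 2 + 4)]
      calc ((2 * k : ℕ) : ℝ) = ∑ _j : Fin k, (2 : ℝ) := by
            simp [Finset.sum_const, Finset.card_univ]
            ring
        _ ≤ ∑ j, Real.sqrt (μ j ^ 2 + 4) := Finset.sum_le_sum fun j _ => h2 j
end
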